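/- arXiv:2106.02309 — 7 statements merged into one kernel-verified Lean document; each statement's English description precedes it below -/
import Mathlib

section
/- Let (Z, ≤) be a totally ordered set, P a partition of Z, X ⊆ Z, and P' = {P_1, …, P_m} ⊆ P. Then the following are equivalent: (1) for every k ∈ ℕ the finite string (P_1 ⋯ P_m)^k occurs in X; (2) the infinite string (P_1 ⋯ P_m)^ω is generated by X. -/
section AuxOcc

variable {Z : Type*} [LinearOrder Z]

private lemma nat_mod_helper0 (m i t : ℕ) : (i*(m*m) + t) % m = t % m := by
  rw [show i*(m*m) = m*(i*m) by ring, Nat.mul_add_mod]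

private lemma nat_modsq (m : ℕ) (hm : 0 < m) : (m*m - 1) % m = m - 1 := by
  obtain ⟨s, rfl⟩ : ∃ s, m = s + 1 := ⟨m - 1, by omega⟩
  rw [show (s+1)*(s+1) = (s+1)*s + s + 1 by ring]
  have h1 : (s+1)*s + s + 1 - 1 = (s+1)*s + s := by omega
  rw [h1, Nat.mul_add_mod, Nat.mod_eq_of_lt (by omega)]
  omega

private lemma nat_mod_helper2 (m r : ℕ) (hr : r < m) : ((m-1)*(m-r)) % m = r := by
  obtain ⟨s, rfl⟩ : ∃ s, m = r + 1 + s := ⟨m - r - 1, by omega⟩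
  have h1 : (r+1+s) - 1 = r + s := by omega
  have h2 : (r+1+s) - r = s + 1 := by omega
  rw [h1, h2, show (r+s)*(s+1) = (r+1+s)*s + r by ring, Nat.mul_add_mod,
    Nat.mod_eq_of_lt (by omega)]

private lemma nat_msub (m : ℕ) (hm : 0 < m) : (m-1)*m + m = m*m := by
  obtain ⟨s, rfl⟩ : ∃ s, m = s + 1 := ⟨m - 1, by omega⟩
  rw [Nat.add_sub_cancel]; ring

private lemma chain_of_step {α : Type*} (R : α → α → Prop) (q0 : α)
    (step : ∀ q, ∃ q', R q q') :
    ∃ g : ℕ → α, g 0 = q0 ∧ ∀ n, R (g n) (g (n+1)) := by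
  choose f hf using step
  refine ⟨fun n => f^[n] q0, rfl, fun n => ?_⟩
  show R (f^[n] q0) (f^[n+1] q0)
  rw [Function.iterate_succ_apply']
  exact hf _

private lemma build_asc {X : Set Z} {m : ℕ} (hm : 0 < m) {p : Fin m → Set Z}
    (F : ℕ → ℕ → Z) (hFmono : ∀ k, Monotone (F k))
    (hFmem : ∀ k j, j < m*(m*(k+1)) → F k j ∈ X ∧ F k j ∈ p ⟨j % m, Nat.mod_lt _ hm⟩)
    (it : ℕ → ℕ × ℕ) (hval : ∀ n, (it n).2 ≤ (it n).1)
    (hsep : ∀ n, F (it n).1 ((it n).2 * (m*m) + (m*m - 1)) ≤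
      F (it (n+1)).1 ((it (n+1)).2 * (m*m))) :
    ∃ y : ℕ → Z, (Monotone y ∨ Antitone y) ∧
      ∀ j : ℕ, y j ∈ X ∧ y j ∈ p ⟨j % m, Nat.mod_lt _ hm⟩ := by
  have hmm : 0 < m*m := Nat.mul_pos hm hm
  have hmlemm : m ≤ m*m := Nat.le_mul_of_pos_left m hm
  refine ⟨fun n => F (it (n / m)).1 ((it (n / m)).2 * (m*m) + n % m), Or.inl ?_, ?_⟩
  · apply monotone_nat_of_le_succ
    intro n
    have hrm : n % m < m := Nat.mod_lt _ hm
    have hnd : m * (n / m) + n % m = n := Nat.div_add_mod n m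
    by_cases hcase : n % m + 1 < m
    · have e1 : n + 1 = (n % m + 1) + m * (n / m) := by omega
      have hd : (n+1)/m = n/m := by
        rw [e1, Nat.add_mul_div_left _ _ hm, Nat.div_eq_of_lt hcase, Nat.zero_add]
      have hmo : (n+1)%m = n % m + 1 := by
        rw [e1, Nat.add_mul_mod_self_left, Nat.mod_eq_of_lt hcase]
      simp only [hd, hmo]
      exact hFmono _ (by omega)
    · have emul : m * (n / m + 1) = m * (n / m) + m := by ring
      have e1 : n + 1 = 0 + m * (n / m + 1) := by omega
      have hd : (n+1)/m = n/m + 1 := by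
        rw [e1, Nat.add_mul_div_left _ _ hm, Nat.zero_div, Nat.zero_add]
      have hmo : (n+1)%m = 0 := by
        rw [e1, Nat.add_mul_mod_self_left, Nat.zero_mod]
      simp only [hd, hmo]
      rw [Nat.add_zero]
      calc F (it (n/m)).1 ((it (n/m)).2 * (m*m) + n % m)
          ≤ F (it (n/m)).1 ((it (n/m)).2 * (m*m) + (m*m - 1)) := hFmono _ (by omega)
        _ ≤ F (it (n/m + 1)).1 ((it (n/m + 1)).2 * (m*m)) := hsep _
  · intro j
    have hrm : j % m < m := Nat.mod_lt _ hm
    have hv := hval (j / m)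
    have h1 : ((it (j/m)).2 + 1) * (m*m) = (it (j/m)).2 * (m*m) + m*m := by ring
    have h2 : ((it (j/m)).2 + 1) * (m*m) ≤ ((it (j/m)).1 + 1) * (m*m) :=
      Nat.mul_le_mul_right _ (by omega)
    have h3 : ((it (j/m)).1 + 1) * (m*m) = m*(m*((it (j/m)).1 + 1)) := by ring
    have hb : (it (j/m)).2 * (m*m) + j % m < m*(m*((it (j/m)).1 + 1)) := by omega
    obtain ⟨hX, hpm⟩ := hFmem (it (j/m)).1 _ hb
    refine ⟨hX, ?_⟩
    have hmod : ((it (j/m)).2 * (m*m) + j % m) % m = j % m := by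
      rw [nat_mod_helper0, Nat.mod_eq_of_lt hrm]
    rwa [show (⟨((it (j/m)).2 * (m*m) + j % m) % m, Nat.mod_lt _ hm⟩ : Fin m)
      = ⟨j % m, Nat.mod_lt _ hm⟩ from Fin.ext hmod] at hpm

private lemma build_desc {X : Set Z} {m : ℕ} (hm : 0 < m) {p : Fin m → Set Z}
    (F : ℕ → ℕ → Z) (hFmono : ∀ k, Monotone (F k))
    (hFmem : ∀ k j, j < m*(m*(k+1)) → F k j ∈ X ∧ F k j ∈ p ⟨j % m, Nat.mod_lt _ hm⟩)
    (it : ℕ → ℕ × ℕ) (hval : ∀ n, (it n).2 ≤ (it n).1)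
    (hsep : ∀ n, F (it (n+1)).1 ((it (n+1)).2 * (m*m) + (m*m - 1)) ≤
      F (it n).1 ((it n).2 * (m*m))) :
    ∃ y : ℕ → Z, (Monotone y ∨ Antitone y) ∧
      ∀ j : ℕ, y j ∈ X ∧ y j ∈ p ⟨j % m, Nat.mod_lt _ hm⟩ := by
  have hmm : 0 < m*m := Nat.mul_pos hm hm
  have hmlemm : m ≤ m*m := Nat.le_mul_of_pos_left m hm
  have hsub : (m-1)*m + m = m*m := nat_msub m hm
  refine ⟨fun n => F (it (n / m)).1 ((it (n / m)).2 * (m*m) + (m-1)*(m - n % m)),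
    Or.inr ?_, ?_⟩
  · apply antitone_nat_of_succ_le
    intro n
    have hrm : n % m < m := Nat.mod_lt _ hm
    have hnd : m * (n / m) + n % m = n := Nat.div_add_mod n m
    by_cases hcase : n % m + 1 < m
    · have e1 : n + 1 = (n % m + 1) + m * (n / m) := by omega
      have hd : (n+1)/m = n/m := by
        rw [e1, Nat.add_mul_div_left _ _ hm, Nat.div_eq_of_lt hcase, Nat.zero_add]
      have hmo : (n+1)%m = n % m + 1 := by
        rw [e1, Nat.add_mul_mod_self_left, Nat.mod_eq_of_lt hcase]
      simp only [hd, hmo]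
      refine hFmono _ ?_
      have : (m-1)*(m - (n % m + 1)) ≤ (m-1)*(m - n % m) :=
        Nat.mul_le_mul_left _ (by omega)
      omega
    · have emul : m * (n / m + 1) = m * (n / m) + m := by ring
      have e1 : n + 1 = 0 + m * (n / m + 1) := by omega
      have hd : (n+1)/m = n/m + 1 := by
        rw [e1, Nat.add_mul_div_left _ _ hm, Nat.zero_div, Nat.zero_add]
      have hmo : (n+1)%m = 0 := by
        rw [e1, Nat.add_mul_mod_self_left, Nat.zero_mod]
      simp only [hd, hmo]
      have e2 : m - 0 = m := by omega
      rw [e2]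
      calc F (it (n/m + 1)).1 ((it (n/m + 1)).2 * (m*m) + (m-1)*m)
          ≤ F (it (n/m + 1)).1 ((it (n/m + 1)).2 * (m*m) + (m*m - 1)) :=
            hFmono _ (by omega)
        _ ≤ F (it (n/m)).1 ((it (n/m)).2 * (m*m)) := hsep _
        _ ≤ F (it (n/m)).1 ((it (n/m)).2 * (m*m) + (m-1)*(m - n % m)) :=
            hFmono _ (Nat.le_add_right _ _)
  · intro j
    have hrm : j % m < m := Nat.mod_lt _ hm
    have hv := hval (j / m)
    have hoff : (m-1)*(m - j % m) ≤ (m-1)*m := Nat.mul_le_mul_left _ (by omega)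
    have h1 : ((it (j/m)).2 + 1) * (m*m) = (it (j/m)).2 * (m*m) + m*m := by ring
    have h2 : ((it (j/m)).2 + 1) * (m*m) ≤ ((it (j/m)).1 + 1) * (m*m) :=
      Nat.mul_le_mul_right _ (by omega)
    have h3 : ((it (j/m)).1 + 1) * (m*m) = m*(m*((it (j/m)).1 + 1)) := by ring
    have hb : (it (j/m)).2 * (m*m) + (m-1)*(m - j % m) < m*(m*((it (j/m)).1 + 1)) := by
      omega
    obtain ⟨hX, hpm⟩ := hFmem (it (j/m)).1 _ hb
    refine ⟨hX, ?_⟩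
    have hmod : ((it (j/m)).2 * (m*m) + (m-1)*(m - j % m)) % m = j % m := by
      rw [nat_mod_helper0, nat_mod_helper2 m _ hrm]
    rwa [show (⟨((it (j/m)).2 * (m*m) + (m-1)*(m - j % m)) % m, Nat.mod_lt _ hm⟩ : Fin m)
      = ⟨j % m, Nat.mod_lt _ hm⟩ from Fin.ext hmod] at hpm

end AuxOcc


private lemma backward_main {Z : Type*} [LinearOrder Z] (X : Set Z) (m : ℕ) (hm : 0 < m)
    (p : Fin m → Set Z) (y : ℕ → Z) (hy : Monotone y ∨ Antitone y)
    (hl : ∀ j : ℕ, y j ∈ X ∧ y j ∈ p ⟨j % m, Nat.mod_lt _ hm⟩) (k : ℕ) :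
    ∃ x : Fin (m * k) → Z, Monotone x ∧
      ∀ j : Fin (m * k), x j ∈ X ∧ x j ∈ p ⟨(j : ℕ) % m, Nat.mod_lt _ hm⟩ := by
  rcases hy with hy | hy
  · exact ⟨fun j => y j, fun a b hab => hy hab, fun j => hl j⟩
  · refine ⟨fun j => y ((k*m - (j:ℕ))*m + (j:ℕ) % m), ?_, ?_⟩
    · intro u v huv
      have hu : (u:ℕ) ≤ (v:ℕ) := huv
      have hle : (k*m - (v:ℕ))*m + (v:ℕ)%m ≤ (k*m - (u:ℕ))*m + (u:ℕ)%m := by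
        rcases eq_or_lt_of_le hu with h | h
        · rw [h]
        · have hv : (v:ℕ) < m*k := v.isLt
          have h1 : (k*m - (v:ℕ)) + 1 ≤ k*m - (u:ℕ) := by
            have hcomm : m*k = k*m := Nat.mul_comm m k
            omega
          have h2 : (v:ℕ)%m < m := Nat.mod_lt _ hm
          calc (k*m - (v:ℕ))*m + (v:ℕ)%m ≤ (k*m - (v:ℕ))*m + m := by omega
            _ = ((k*m - (v:ℕ)) + 1)*m := by ring
            _ ≤ (k*m - (u:ℕ))*m := Nat.mul_le_mul_right _ h1
            _ ≤ (k*m - (u:ℕ))*m + (u:ℕ)%m := Nat.le_add_right _ _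
      exact hy hle
    · intro j
      have h := hl ((k*m - (j:ℕ))*m + (j:ℕ) % m)
      refine ⟨h.1, ?_⟩
      have h2 := h.2
      have hmod : ((k*m - (j:ℕ))*m + (j:ℕ)%m) % m = (j:ℕ)%m := by
        rw [show (k*m - (j:ℕ))*m + (j:ℕ)%m = m*(k*m - (j:ℕ)) + (j:ℕ)%m by ring,
          Nat.mul_add_mod, Nat.mod_eq_of_lt (Nat.mod_lt _ hm)]
      rwa [show (⟨((k*m - (j:ℕ))*m + (j:ℕ)%m) % m, Nat.mod_lt _ hm⟩ : Fin m)
        = ⟨(j:ℕ)%m, Nat.mod_lt _ hm⟩ from Fin.ext hmod] at h2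

private lemma forward_main {Z : Type*} [LinearOrder Z] (X : Set Z) (m : ℕ)
    (hm : 0 < m) (hm2 : 2 ≤ m) (p : Fin m → Set Z)
    (hdisj : ∀ (r s : Fin m) (z : Z), z ∈ p r → z ∈ p s → r = s)
    (H : ∀ k : ℕ, ∃ x : Fin (m * k) → Z, Monotone x ∧
        ∀ j : Fin (m * k), x j ∈ X ∧ x j ∈ p ⟨(j : ℕ) % m, Nat.mod_lt _ hm⟩) :
    ∃ y : ℕ → Z, (Monotone y ∨ Antitone y) ∧
      ∀ j : ℕ, y j ∈ X ∧ y j ∈ p ⟨j % m, Nat.mod_lt _ hm⟩ := by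
  have hmm : 0 < m*m := Nat.mul_pos hm hm
  have hmlemm : m ≤ m*m := Nat.le_mul_of_pos_left m hm
  choose T hT1 hT2 using fun k => H (m*(k+1))
  have hNpos : ∀ k : ℕ, 0 < m*(m*(k+1)) := fun k => by positivity
  set F : ℕ → ℕ → Z := fun k j =>
    T k ⟨min j (m*(m*(k+1)) - 1),
      (min_le_right _ _).trans_lt (Nat.sub_lt (hNpos k) Nat.one_pos)⟩ with hFdef
  have hFmono : ∀ k, Monotone (F k) := by
    intro k u v huv
    exact hT1 k (by simp only [Fin.mk_le_mk]; exact min_le_min huv le_rfl)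
  have hFmem : ∀ k j, j < m*(m*(k+1)) →
      F k j ∈ X ∧ F k j ∈ p ⟨j % m, Nat.mod_lt _ hm⟩ := by
    intro k j hj
    have hmin : min j (m*(m*(k+1)) - 1) = j := min_eq_left (by omega)
    have h := hT2 k ⟨min j (m*(m*(k+1)) - 1),
      (min_le_right _ _).trans_lt (Nat.sub_lt (hNpos k) Nat.one_pos)⟩
    refine ⟨h.1, ?_⟩
    have h2 := h.2
    rwa [show (⟨((⟨min j (m*(m*(k+1)) - 1),
        (min_le_right _ _).trans_lt (Nat.sub_lt (hNpos k) Nat.one_pos)⟩ :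
        Fin (m * (m*(k+1)))) : ℕ) % m, Nat.mod_lt _ hm⟩ : Fin m)
      = ⟨j % m, Nat.mod_lt _ hm⟩ from Fin.ext (by simp [hmin])] at h2
  have hsepZ : ∀ k i, i + 1 ≤ k → F k (i*(m*m) + (m*m - 1)) < F k ((i+1)*(m*m)) := by
    intro k i hik
    have e : (i+1)*(m*m) = i*(m*m) + m*m := by ring
    have hb2 : (i+1)*(m*m) < m*(m*(k+1)) := by
      have h2 : (i+1)*(m*m) ≤ k*(m*m) := Nat.mul_le_mul_right _ (by omega)
      have h3 : m*(m*(k+1)) = k*(m*m) + m*m := by ring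
      omega
    have hb1 : i*(m*m) + (m*m - 1) < m*(m*(k+1)) := by omega
    have hle : F k (i*(m*m) + (m*m - 1)) ≤ F k ((i+1)*(m*m)) := hFmono k (by omega)
    rcases lt_or_eq_of_le hle with h | h
    · exact h
    · exfalso
      have m1 := (hFmem k _ hb1).2
      have m2 := (hFmem k _ hb2).2
      rw [h] at m1
      have heq := hdisj _ _ _ m1 m2
      have hv := congrArg Fin.val heq
      simp only at hv
      rw [nat_mod_helper0, nat_modsq m hm,
        show (i+1)*(m*m) = m*((i+1)*m) by ring, Nat.mul_mod_right] at hv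
      omega
  -- countable range and embedding into ℝ
  have hSc : (Set.range (fun q : ℕ × ℕ => F q.1 q.2)).Countable := Set.countable_range _
  haveI := hSc.to_subtype
  obtain ⟨φ⟩ : Nonempty ((Set.range (fun q : ℕ × ℕ => F q.1 q.2)) ↪o ℝ) :=
    Order.embedding_from_countable_to_dense _ ℝ
  have memS : ∀ k j, F k j ∈ Set.range (fun q : ℕ × ℕ => F q.1 q.2) :=
    fun k j => ⟨(k, j), rfl⟩
  have key_le : ∀ (u v : Z) (hu : u ∈ Set.range (fun q : ℕ × ℕ => F q.1 q.2))
      (hv : v ∈ Set.range (fun q : ℕ × ℕ => F q.1 q.2)),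
      (φ ⟨u, hu⟩ ≤ φ ⟨v, hv⟩ ↔ u ≤ v) := by
    intro u v hu hv
    rw [OrderEmbedding.le_iff_le, Subtype.mk_le_mk]
  have key_lt : ∀ (u v : Z) (hu : u ∈ Set.range (fun q : ℕ × ℕ => F q.1 q.2))
      (hv : v ∈ Set.range (fun q : ℕ × ℕ => F q.1 q.2)),
      (φ ⟨u, hu⟩ < φ ⟨v, hv⟩ ↔ u < v) := by
    intro u v hu hv
    rw [OrderEmbedding.lt_iff_lt, Subtype.mk_lt_mk]
  set a : ℕ → ℕ → ℝ := fun k i => φ ⟨F k (i*(m*m)), memS _ _⟩ with hadef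
  set b : ℕ → ℕ → ℝ := fun k i => φ ⟨F k (i*(m*m) + (m*m - 1)), memS _ _⟩ with hbdef
  have hab : ∀ k i, a k i ≤ b k i := fun k i =>
    (key_le _ _ (memS _ _) (memS _ _)).2 (hFmono k (Nat.le_add_right _ _))
  have hsepR : ∀ k i, i + 1 ≤ k → b k i < a k (i+1) := fun k i h =>
    (key_lt _ _ (memS _ _) (memS _ _)).2 (hsepZ k i h)
  have hDmono : ∀ {u v : ℝ}, (∀ n : ℕ, ∃ k i, i + n ≤ k ∧ b k (i+n) ≤ u) → u ≤ v →
      (∀ n : ℕ, ∃ k i, i + n ≤ k ∧ b k (i+n) ≤ v) := by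
    intro u v hD huv n
    obtain ⟨k, i, h1, h2⟩ := hD n
    exact ⟨k, i, h1, h2.trans huv⟩
  have hsplit : ∀ x : ℝ, (∀ n : ℕ, ∃ k i, i + n ≤ k ∧ b k (i+n) ≤ x) ∨
      (∀ n : ℕ, ∃ k i, i + n ≤ k ∧ x ≤ a k i) := by
    intro x
    by_contra hcon
    push_neg at hcon
    obtain ⟨hD, hU⟩ := hcon
    obtain ⟨n₁, h1⟩ := hD
    obtain ⟨n₂, h2⟩ := hU
    have hx : x < b (n₁+n₂+1) (0+n₁) := h1 (n₁+n₂+1) 0 (by omega)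
    have hs : b (n₁+n₂+1) (0+n₁) < a (n₁+n₂+1) (0+n₁+1) :=
      hsepR (n₁+n₂+1) (0+n₁) (by omega)
    have ha2 : a (n₁+n₂+1) (0+n₁+1) < x := h2 (n₁+n₂+1) (0+n₁+1) (by omega)
    linarith
  by_cases hUall : ∀ x : ℝ, ∀ n : ℕ, ∃ k i, i + n ≤ k ∧ x ≤ a k i
  · -- ascending, unbounded above
    have step : ∀ q : {q : ℕ × ℕ // q.2 ≤ q.1}, ∃ q' : {q : ℕ × ℕ // q.2 ≤ q.1},
        b q.1.1 q.1.2 ≤ a q'.1.1 q'.1.2 := by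
      intro q
      obtain ⟨k, i, h1, h2⟩ := hUall (b q.1.1 q.1.2) 0
      exact ⟨⟨(k, i), by omega⟩, h2⟩
    obtain ⟨g, -, hg⟩ := chain_of_step _ ⟨(0,0), le_rfl⟩ step
    exact build_asc hm F hFmono hFmem (fun n => (g n).1) (fun n => (g n).2)
      (fun n => (key_le _ _ (memS _ _) (memS _ _)).1 (hg n))
  · push_neg at hUall
    obtain ⟨x₀, n₀, hx₀⟩ := hUall
    have hDx₀ : ∀ n : ℕ, ∃ k i, i + n ≤ k ∧ b k (i+n) ≤ x₀ := by
      rcases hsplit x₀ with h | h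
      · exact h
      · obtain ⟨k, i, hik, hle⟩ := h n₀
        exact absurd hle (not_le.2 (hx₀ k i hik))
    by_cases hDall : ∀ x : ℝ, ∀ n : ℕ, ∃ k i, i + n ≤ k ∧ b k (i+n) ≤ x
    · -- descending, unbounded below
      have step : ∀ q : {q : ℕ × ℕ // q.2 ≤ q.1}, ∃ q' : {q : ℕ × ℕ // q.2 ≤ q.1},
          b q'.1.1 q'.1.2 ≤ a q.1.1 q.1.2 := by
        intro q
        obtain ⟨k, i, h1, h2⟩ := hDall (a q.1.1 q.1.2) 0
        exact ⟨⟨(k, i), by omega⟩, by simpa using h2⟩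
      obtain ⟨g, -, hg⟩ := chain_of_step _ ⟨(0,0), le_rfl⟩ step
      exact build_desc hm F hFmono hFmem (fun n => (g n).1) (fun n => (g n).2)
        (fun n => (key_le _ _ (memS _ _) (memS _ _)).1 (hg n))
    · push_neg at hDall
      obtain ⟨x₁, hx₁⟩ := hDall
      have hbdd : BddBelow {x : ℝ | ∀ n : ℕ, ∃ k i, i + n ≤ k ∧ b k (i+n) ≤ x} := by
        refine ⟨x₁, fun y hy => ?_⟩
        by_contra hcon
        push_neg at hcon
        obtain ⟨n₃, h3⟩ := hx₁
        obtain ⟨k, i, h4, h5⟩ := hy n₃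
        have := h3 k i h4
        linarith
      have hne : {x : ℝ | ∀ n : ℕ, ∃ k i, i + n ≤ k ∧ b k (i+n) ≤ x}.Nonempty := ⟨x₀, hDx₀⟩
      set c := sInf {x : ℝ | ∀ n : ℕ, ∃ k i, i + n ≤ k ∧ b k (i+n) ≤ x} with hc
      have hcup : ∀ x : ℝ, c < x → ∀ n : ℕ, ∃ k i, i + n ≤ k ∧ b k (i+n) ≤ x := by
        intro x hx
        obtain ⟨y, hy, hyx⟩ := exists_lt_of_csInf_lt hne hx
        exact hDmono hy hyx.le
      have hclow : ∀ x : ℝ, x < c → ¬ (∀ n : ℕ, ∃ k i, i + n ≤ k ∧ b k (i+n) ≤ x) := by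
        intro x hx hDx
        exact absurd (csInf_le hbdd hDx) (not_le.2 hx)
      by_cases hcD : ∀ n : ℕ, ∃ k i, i + n ≤ k ∧ b k (i+n) ≤ c
      · -- ascending towards c from below
        have claim : ∀ t : ℝ, t < c → ∃ k i, i + 1 ≤ k ∧ t < a k i ∧ b k (i+1) ≤ c := by
          intro t ht
          have hnt := hclow t ht
          push_neg at hnt
          obtain ⟨n₁, h1⟩ := hnt
          obtain ⟨k, i, h2, h3⟩ := hcD (n₁ + 2)
          refine ⟨k, i + n₁ + 1, by omega, ?_, ?_⟩
          · have ht1 : t < b k (i + n₁) := h1 k i (by omega)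
            have ht2 : b k (i+n₁) < a k (i+n₁+1) := hsepR k (i+n₁) (by omega)
            linarith
          · have e : i + n₁ + 1 + 1 = i + (n₁ + 2) := by omega
            rw [e]; exact h3
        have step : ∀ q : {q : ℕ × ℕ // q.2 ≤ q.1 ∧ b q.1 q.2 < c},
            ∃ q' : {q : ℕ × ℕ // q.2 ≤ q.1 ∧ b q.1 q.2 < c},
              b q.1.1 q.1.2 ≤ a q'.1.1 q'.1.2 := by
          intro q
          obtain ⟨k, i, h1, h2, h3⟩ := claim (b q.1.1 q.1.2) q.2.2
          have hbi : b k i < c := lt_of_lt_of_le (hsepR k i h1) ((hab k (i+1)).trans h3)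
          exact ⟨⟨(k, i), by omega, hbi⟩, h2.le⟩
        obtain ⟨k0, i0, h01, h02, h03⟩ := claim (c - 1) (by linarith)
        have hb0 : b k0 i0 < c := lt_of_lt_of_le (hsepR k0 i0 h01) ((hab k0 (i0+1)).trans h03)
        obtain ⟨g, -, hg⟩ := chain_of_step _ ⟨(k0, i0), by omega, hb0⟩ step
        exact build_asc hm F hFmono hFmem (fun n => (g n).1) (fun n => (g n).2.1)
          (fun n => (key_le _ _ (memS _ _) (memS _ _)).1 (hg n))
      · -- descending towards c from above
        push_neg at hcD
        obtain ⟨n₁, h1⟩ := hcD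
        have claim : ∀ y : ℝ, c < y → ∃ k i, i ≤ k ∧ c < a k i ∧ b k i ≤ y := by
          intro y hy
          obtain ⟨k, i, h2, h3⟩ := hcup y hy (n₁ + 1)
          refine ⟨k, i + n₁ + 1, by omega, ?_, ?_⟩
          · have hc1 : c < b k (i + n₁) := h1 k i (by omega)
            have hc2 : b k (i+n₁) < a k (i+n₁+1) := hsepR k (i+n₁) (by omega)
            linarith
          · have e : i + n₁ + 1 = i + (n₁ + 1) := by omega
            rw [e]; exact h3
        have step : ∀ q : {q : ℕ × ℕ // q.2 ≤ q.1 ∧ c < a q.1 q.2},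
            ∃ q' : {q : ℕ × ℕ // q.2 ≤ q.1 ∧ c < a q.1 q.2},
              b q'.1.1 q'.1.2 ≤ a q.1.1 q.1.2 := by
          intro q
          obtain ⟨k, i, h2, h3, h4⟩ := claim (a q.1.1 q.1.2) q.2.2
          exact ⟨⟨(k, i), h2, h3⟩, h4⟩
        obtain ⟨k0, i0, h01, h02, h03⟩ := claim (c + 1) (by linarith)
        obtain ⟨g, -, hg⟩ := chain_of_step _ ⟨(k0, i0), h01, h02⟩ step
        exact build_desc hm F hFmono hFmem (fun n => (g n).1) (fun n => (g n).2.1)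
          (fun n => (key_le _ _ (memS _ _) (memS _ _)).1 (hg n))

/-- For a finite subset `{P₁, …, P_m}` of a partition `P` of a totally ordered set `Z` and
`X ⊆ Z`: every finite power `(P₁ ⋯ P_m)^k` occurs in `X` (via a non-decreasing tuple of
elements of `X`) if and only if the infinite string `(P₁ ⋯ P_m)^ω` is generated by `X`
(via a monotone sequence of elements of `X`). -/
theorem occurs_all_powers_iff_generated_omega {Z : Type*} [LinearOrder Z]
    (P : Set (Set Z)) (hP : Setoid.IsPartition P) (X : Set Z)
    (m : ℕ) (hm : 0 < m) (p : Fin m → Set Z)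
    (hinj : Function.Injective p) (hp : ∀ i, p i ∈ P) :
    (∀ k : ℕ, ∃ x : Fin (m * k) → Z, Monotone x ∧
        ∀ j : Fin (m * k), x j ∈ X ∧ x j ∈ p ⟨(j : ℕ) % m, Nat.mod_lt _ hm⟩) ↔
    (∃ x : ℕ → Z, (Monotone x ∨ Antitone x) ∧
        ∀ j : ℕ, x j ∈ X ∧ x j ∈ p ⟨j % m, Nat.mod_lt _ hm⟩) := by
  constructor
  · intro H
    by_cases hm2 : 2 ≤ m
    · have hdisj : ∀ (r s : Fin m) (z : Z), z ∈ p r → z ∈ p s → r = s := by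
        intro r s z hr hs
        obtain ⟨q, ⟨hq1, hq2⟩, hq3⟩ := hP.2 z
        exact hinj ((hq3 (p r) ⟨hp r, hr⟩).trans (hq3 (p s) ⟨hp s, hs⟩).symm)
      exact forward_main X m hm hm2 p hdisj H
    · have hm1 : m = 1 := by omega
      subst hm1
      obtain ⟨x, -, hx⟩ := H 1
      refine ⟨fun _ => x ⟨0, by omega⟩, Or.inl monotone_const, ?_⟩
      intro j
      have h := hx ⟨0, by omega⟩
      exact ⟨h.1, by convert h.2 using 2⟩
  · rintro ⟨y, hy, hl⟩ k
    exact backward_main X m hm p y hy hl k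
end

section
/- Let (Z, ≤) be a totally ordered set and P a partition of Z. Let C ⊆ Z be a convex entangled set, and suppose C_1 and C_2 are convex sets with C = C_1 ∪ C_2. Then there exists i ∈ {1, 2} such that C_i is entangled and P_{C_i} = P_C. -/
/-- A convex subset of a totally ordered set. -/
def IsConvexSet {Z : Type*} [LinearOrder Z] (C : Set Z) : Prop :=
  ∀ ⦃x y z : Z⦄, x ∈ C → z ∈ C → x ≤ y → y ≤ z → y ∈ C

/-- `𝒫_X`: the elements of the partition `P` meeting `X`. -/
def PartsMeeting {Z : Type*} (P : Set (Set Z)) (X : Set Z) : Set (Set Z) :=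
  {A ∈ P | (A ∩ X).Nonempty}

/-- The infinite string `(p 0 ⋯ p (m-1))^ω` is generated by `X`: there is a monotone
sequence of elements of `X` following the cyclic pattern `p`. -/
def GeneratesOmega {Z : Type*} [LinearOrder Z] (X : Set Z) (m : ℕ) (p : Fin m → Set Z) : Prop :=
  ∃ hm : 0 < m, ∃ x : ℕ → Z, (Monotone x ∨ Antitone x) ∧
    ∀ j : ℕ, x j ∈ X ∧ x j ∈ p ⟨j % m, Nat.mod_lt _ hm⟩

/-- `X` is entangled (with respect to the partition `P`): the set `𝒫_X` of parts meeting `X`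
can be enumerated as `P₁, …, P_m` so that `(P₁ ⋯ P_m)^ω` is generated by `X`. -/
def EntangledSet {Z : Type*} [LinearOrder Z] (P : Set (Set Z)) (X : Set Z) : Prop :=
  ∃ (m : ℕ) (p : Fin m → Set Z), Function.Injective p ∧
    Set.range p = PartsMeeting P X ∧ GeneratesOmega X m p

/-- Two order-convex subsets of ℕ covering ℕ: one contains a tail. -/
lemma tail_of_cover (A B : Set ℕ)
    (hA : ∀ ⦃j i k : ℕ⦄, j ∈ A → k ∈ A → j ≤ i → i ≤ k → i ∈ A)
    (hcov : ∀ j, j ∈ A ∨ j ∈ B) :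
    (∃ N, ∀ j, N ≤ j → j ∈ A) ∨ (∃ N, ∀ j, N ≤ j → j ∈ B) := by
  by_cases h : ∃ M, ∀ a ∈ A, a ≤ M
  · obtain ⟨M, hM⟩ := h
    exact Or.inr ⟨M + 1, fun j hj =>
      (hcov j).resolve_left fun ha => by have := hM j ha; omega⟩
  · push_neg at h
    obtain ⟨a₀, ha₀, -⟩ := h 0
    refine Or.inl ⟨a₀, fun j hj => ?_⟩
    obtain ⟨k, hk, hjk⟩ := h j
    exact hA ha₀ hk hj hjk.le

/-- If the generating sequence eventually lies in `D ⊆ C`, then `D` is entangled with the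
same parts as `C`. -/
lemma entangled_of_tail {Z : Type*} [LinearOrder Z] (P : Set (Set Z)) (C D : Set Z)
    (hD : D ⊆ C) (m : ℕ) (p : Fin m → Set Z) (hinj : Function.Injective p)
    (hrange : Set.range p = PartsMeeting P C) (hm : 0 < m) (x : ℕ → Z)
    (hmono : Monotone x ∨ Antitone x)
    (hx : ∀ j : ℕ, x j ∈ p ⟨j % m, Nat.mod_lt _ hm⟩)
    (N : ℕ) (htail : ∀ j, N ≤ j → x j ∈ D) :
    EntangledSet P D ∧ PartsMeeting P D = PartsMeeting P C := by
  set y : ℕ → Z := fun j => x (j + m * N) with hy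
  have hmN : ∀ j : ℕ, N ≤ j + m * N := fun j => by nlinarith
  have hymem : ∀ j : ℕ, y j ∈ D := fun j => htail _ (hmN j)
  have hyp : ∀ j : ℕ, y j ∈ p ⟨j % m, Nat.mod_lt _ hm⟩ := by
    intro j
    have h1 := hx (j + m * N)
    have h2 : (j + m * N) % m = j % m := by
      simp [Nat.add_mul_mod_self_left]
    convert h1 using 3
    omega
  have hrangeD : Set.range p = PartsMeeting P D := by
    ext A
    constructor
    · rintro ⟨k, rfl⟩
      have hmemC : p k ∈ PartsMeeting P C := hrange ▸ Set.mem_range_self k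
      refine ⟨hmemC.1, ⟨y k.val, ?_, hymem k.val⟩⟩
      have := hyp k.val
      have hk : (⟨k.val % m, Nat.mod_lt _ hm⟩ : Fin m) = k := by
        ext; exact Nat.mod_eq_of_lt k.isLt
      rwa [hk] at this
    · intro hA
      have : A ∈ PartsMeeting P C := by
        obtain ⟨hAP, z, hz1, hz2⟩ := hA
        exact ⟨hAP, z, hz1, hD hz2⟩
      exact hrange ▸ this
  refine ⟨⟨m, p, hinj, hrangeD, hm, y, ?_, fun j => ⟨hymem j, hyp j⟩⟩, ?_⟩
  · rcases hmono with h | h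
    · exact Or.inl fun a b hab => h (by omega)
    · exact Or.inr fun a b hab => h (by omega)
  · rw [← hrangeD, hrange]

/-- If a convex entangled set `C` is the union of two convex sets `C₁`, `C₂`, then one of
the two is entangled and meets exactly the same parts of the partition as `C`. -/
theorem entangled_of_union_convex {Z : Type*} [LinearOrder Z] (P : Set (Set Z))
    (hP : Setoid.IsPartition P) (C C₁ C₂ : Set Z)
    (hC : IsConvexSet C) (hCent : EntangledSet P C)
    (h₁ : IsConvexSet C₁) (h₂ : IsConvexSet C₂) (hU : C = C₁ ∪ C₂) :
    (EntangledSet P C₁ ∧ PartsMeeting P C₁ = PartsMeeting P C) ∨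
    (EntangledSet P C₂ ∧ PartsMeeting P C₂ = PartsMeeting P C) := by
  obtain ⟨m, p, hinj, hrange, hm, x, hmono, hx⟩ := hCent
  have hsub₁ : C₁ ⊆ C := hU ▸ Set.subset_union_left
  have hsub₂ : C₂ ⊆ C := hU ▸ Set.subset_union_right
  have hconv : ∀ ⦃j i k : ℕ⦄, x j ∈ C₁ → x k ∈ C₁ → j ≤ i → i ≤ k → x i ∈ C₁ := by
    intro j i k hj hk hji hik
    rcases hmono with h | h
    · exact h₁ hj hk (h hji) (h hik)
    · exact h₁ hk hj (h hik) (h hji)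
  have hcov : ∀ j : ℕ, x j ∈ C₁ ∨ x j ∈ C₂ := fun j => by have := (hx j).1; rw [hU] at this; exact this
  rcases tail_of_cover {j | x j ∈ C₁} {j | x j ∈ C₂} (fun _ _ _ hj hk => hconv hj hk) hcov with
    ⟨N, hN⟩ | ⟨N, hN⟩
  · exact Or.inl (entangled_of_tail P C C₁ hsub₁ m p hinj hrange hm x hmono
      (fun j => (hx j).2) N hN)
  · exact Or.inr (entangled_of_tail P C C₂ hsub₂ m p hinj hrange hm x hmono
      (fun j => (hx j).2) N hN)
end

section
/- Let (Z, ≤) be a totally ordered set and let P = {P_1, …, P_m} be a finite partition of Z. Then there exists a finite partition V of Z all of whose elements are convex in (Z, ≤) and entangled (with respect to P). -/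
namespace EntangledAux

variable {Z : Type*} [LinearOrder Z]

theorem partsMeeting_subset (P : Set (Set Z)) (X : Set Z) : PartsMeeting P X ⊆ P :=
  fun _ h => h.1

theorem partsMeeting_mono (P : Set (Set Z)) {X Y : Set Z} (h : X ⊆ Y) :
    PartsMeeting P X ⊆ PartsMeeting P Y :=
  fun A hA => ⟨hA.1, hA.2.imp fun d hd => ⟨hd.1, h hd.2⟩⟩

theorem mem_partsMeeting {P : Set (Set Z)} {X A : Set Z} :
    A ∈ PartsMeeting P X ↔ A ∈ P ∧ ∃ d, d ∈ A ∧ d ∈ X := by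
  constructor
  · rintro ⟨hA, d, hd1, hd2⟩; exact ⟨hA, d, hd1, hd2⟩
  · rintro ⟨hA, d, hd1, hd2⟩; exact ⟨hA, d, hd1, hd2⟩

theorem EntangledSet.nonempty {P : Set (Set Z)} {X : Set Z} (h : EntangledSet P X) :
    X.Nonempty := by
  obtain ⟨m, p, -, -, hm, x, -, hx⟩ := h
  exact ⟨x 0, (hx 0).1⟩

theorem entangled_of_subset_mem {P : Set (Set Z)} (hP : Setoid.IsPartition P)
    {A : Set Z} (hA : A ∈ P) {X : Set Z} (hne : X.Nonempty) (hsub : X ⊆ A) :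
    EntangledSet P X := by
  obtain ⟨x₀, hx₀⟩ := hne
  refine ⟨1, fun _ => A, fun i j _ => Subsingleton.elim i j, ?_, one_pos, fun _ => x₀,
    Or.inl monotone_const, fun j => ⟨hx₀, hsub hx₀⟩⟩
  ext B
  rw [Set.range_const, mem_partsMeeting]
  constructor
  · rintro rfl
    exact ⟨hA, x₀, hsub hx₀, hx₀⟩
  · rintro ⟨hB, d, hdB, hdX⟩
    exact (hP.2 d).unique ⟨hB, hdB⟩ ⟨hA, hsub hdX⟩

/-- A set is good if it has a finite partition into convex entangled pieces. -/
def Good (P : Set (Set Z)) (C : Set Z) : Prop :=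
  ∃ V : Set (Set Z), V.Finite ∧ ⋃₀ V = C ∧ V.PairwiseDisjoint id ∧
    ∀ W ∈ V, IsConvexSet W ∧ EntangledSet P W

theorem good_empty (P : Set (Set Z)) : Good P (∅ : Set Z) :=
  ⟨∅, Set.finite_empty, Set.sUnion_empty, Set.pairwiseDisjoint_empty, by simp⟩

theorem good_of_entangled {P : Set (Set Z)} {C : Set Z} (hconv : IsConvexSet C)
    (hent : EntangledSet P C) : Good P C :=
  ⟨{C}, Set.finite_singleton _, Set.sUnion_singleton _, Set.pairwiseDisjoint_singleton _ _, by
    simp [hconv, hent]⟩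

theorem good_union {P : Set (Set Z)} {C₁ C₂ : Set Z} (hdis : Disjoint C₁ C₂)
    (h₁ : Good P C₁) (h₂ : Good P C₂) : Good P (C₁ ∪ C₂) := by
  obtain ⟨V₁, hf₁, hu₁, hd₁, hw₁⟩ := h₁
  obtain ⟨V₂, hf₂, hu₂, hd₂, hw₂⟩ := h₂
  refine ⟨V₁ ∪ V₂, hf₁.union hf₂, by rw [Set.sUnion_union, hu₁, hu₂], ?_,
    fun W hW => hW.elim (hw₁ W) (hw₂ W)⟩
  intro a ha b hb hab
  rcases ha with ha | ha <;> rcases hb with hb | hb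
  · exact hd₁ ha hb hab
  · exact hdis.mono (hu₁ ▸ Set.subset_sUnion_of_mem ha) (hu₂ ▸ Set.subset_sUnion_of_mem hb)
  · exact hdis.symm.mono (hu₂ ▸ Set.subset_sUnion_of_mem ha)
      (hu₁ ▸ Set.subset_sUnion_of_mem hb)
  · exact hd₂ ha hb hab

theorem good_singleton {P : Set (Set Z)} (hP : Setoid.IsPartition P) (z : Z) :
    Good P ({z} : Set Z) := by
  obtain ⟨A, ⟨hA, hzA⟩, -⟩ := hP.2 z
  refine good_of_entangled ?_ (entangled_of_subset_mem hP hA ⟨z, rfl⟩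
    (Set.singleton_subset_iff.2 hzA))
  rintro x y w rfl rfl hxy hyw
  exact le_antisymm hyw hxy

theorem entangled_of_cofinal (P : Set (Set Z)) (X : Set Z)
    (hfin : (PartsMeeting P X).Finite) (hSne : (PartsMeeting P X).Nonempty)
    (hcof : ∀ A ∈ PartsMeeting P X, ∀ y ∈ X, ∃ d, d ∈ A ∧ d ∈ X ∧ y ≤ d) :
    EntangledSet P X := by
  classical
  have : Fintype (PartsMeeting P X) := hfin.fintype
  have hcard : Fintype.card (PartsMeeting P X) = (PartsMeeting P X).ncard := by
    rw [← Nat.card_coe_set_eq, Nat.card_eq_fintype_card]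
  set m := (PartsMeeting P X).ncard with hmdef
  have hm : 0 < m := (Set.ncard_pos hfin).2 hSne
  let e : (PartsMeeting P X : Set (Set Z)) ≃ Fin m := Fintype.equivFinOfCardEq hcard
  let p : Fin m → Set Z := fun i => (e.symm i : Set Z)
  have hpinj : Function.Injective p := fun i j hij => by
    simpa using e.symm.injective (Subtype.ext hij)
  have hprange : Set.range p = PartsMeeting P X := by
    ext A
    constructor
    · rintro ⟨i, rfl⟩; exact (e.symm i).2
    · intro hA; exact ⟨e ⟨A, hA⟩, by simp [p]⟩
  obtain ⟨A₀, hA₀⟩ := hSne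
  obtain ⟨c₀, hc₀'⟩ := hA₀.2
  have hc₀ : c₀ ∈ X := hc₀'.2
  let q : ℕ → Set Z := fun j => p ⟨j % m, Nat.mod_lt _ hm⟩
  have key : ∀ j : ℕ, ∀ y ∈ X, ∃ d, d ∈ X ∧ d ∈ q j ∧ y ≤ d := by
    intro j y hy
    obtain ⟨d, h1, h2, h3⟩ := hcof (q j) (hprange ▸ Set.mem_range_self _) y hy
    exact ⟨d, h2, h1, h3⟩
  have key2 : ∀ (j : ℕ) (y : Z), ∃ d, y ∈ X → d ∈ X ∧ d ∈ q j ∧ y ≤ d := by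
    intro j y
    by_cases hy : y ∈ X
    · obtain ⟨d, hd⟩ := key j y hy; exact ⟨d, fun _ => hd⟩
    · exact ⟨c₀, fun h => absurd h hy⟩
  choose step hstep using key2
  let x : ℕ → Z := fun j => Nat.rec (step 0 c₀) (fun n prev => step (n + 1) prev) j
  have hx : ∀ j, x j ∈ X ∧ x j ∈ q j := by
    intro j
    induction j with
    | zero => exact ⟨(hstep 0 c₀ hc₀).1, (hstep 0 c₀ hc₀).2.1⟩
    | succ n ih =>
      have h := hstep (n + 1) (x n) ih.1
      exact ⟨h.1, h.2.1⟩
  have hmono : Monotone x :=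
    monotone_nat_of_le_succ fun n => (hstep (n + 1) (x n) (hx n).1).2.2
  exact ⟨m, p, hpinj, hprange, hm, x, Or.inl hmono, fun j => ⟨(hx j).1, (hx j).2⟩⟩

theorem entangled_of_coinitial (P : Set (Set Z)) (X : Set Z)
    (hfin : (PartsMeeting P X).Finite) (hSne : (PartsMeeting P X).Nonempty)
    (hcoi : ∀ A ∈ PartsMeeting P X, ∀ y ∈ X, ∃ d, d ∈ A ∧ d ∈ X ∧ d ≤ y) :
    EntangledSet P X := by
  classical
  have : Fintype (PartsMeeting P X) := hfin.fintype
  have hcard : Fintype.card (PartsMeeting P X) = (PartsMeeting P X).ncard := by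
    rw [← Nat.card_coe_set_eq, Nat.card_eq_fintype_card]
  set m := (PartsMeeting P X).ncard with hmdef
  have hm : 0 < m := (Set.ncard_pos hfin).2 hSne
  let e : (PartsMeeting P X : Set (Set Z)) ≃ Fin m := Fintype.equivFinOfCardEq hcard
  let p : Fin m → Set Z := fun i => (e.symm i : Set Z)
  have hpinj : Function.Injective p := fun i j hij => by
    simpa using e.symm.injective (Subtype.ext hij)
  have hprange : Set.range p = PartsMeeting P X := by
    ext A
    constructor
    · rintro ⟨i, rfl⟩; exact (e.symm i).2
    · intro hA; exact ⟨e ⟨A, hA⟩, by simp [p]⟩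
  obtain ⟨A₀, hA₀⟩ := hSne
  obtain ⟨c₀, hc₀'⟩ := hA₀.2
  have hc₀ : c₀ ∈ X := hc₀'.2
  let q : ℕ → Set Z := fun j => p ⟨j % m, Nat.mod_lt _ hm⟩
  have key : ∀ j : ℕ, ∀ y ∈ X, ∃ d, d ∈ X ∧ d ∈ q j ∧ d ≤ y := by
    intro j y hy
    obtain ⟨d, h1, h2, h3⟩ := hcoi (q j) (hprange ▸ Set.mem_range_self _) y hy
    exact ⟨d, h2, h1, h3⟩
  have key2 : ∀ (j : ℕ) (y : Z), ∃ d, y ∈ X → d ∈ X ∧ d ∈ q j ∧ d ≤ y := by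
    intro j y
    by_cases hy : y ∈ X
    · obtain ⟨d, hd⟩ := key j y hy; exact ⟨d, fun _ => hd⟩
    · exact ⟨c₀, fun h => absurd h hy⟩
  choose step hstep using key2
  let x : ℕ → Z := fun j => Nat.rec (step 0 c₀) (fun n prev => step (n + 1) prev) j
  have hx : ∀ j, x j ∈ X ∧ x j ∈ q j := by
    intro j
    induction j with
    | zero => exact ⟨(hstep 0 c₀ hc₀).1, (hstep 0 c₀ hc₀).2.1⟩
    | succ n ih =>
      have h := hstep (n + 1) (x n) ih.1
      exact ⟨h.1, h.2.1⟩
  have hanti : Antitone x :=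
    antitone_nat_of_succ_le fun n => (hstep (n + 1) (x n) (hx n).1).2.2
  exact ⟨m, p, hpinj, hprange, hm, x, Or.inr hanti, fun j => ⟨(hx j).1, (hx j).2⟩⟩

theorem good_of_ncard_le {P : Set (Set Z)} (hP : Setoid.IsPartition P) (hfinP : P.Finite) :
    ∀ n : ℕ, ∀ C : Set Z, IsConvexSet C → (PartsMeeting P C).ncard ≤ n → Good P C := by
  have hspecfin : ∀ X : Set Z, (PartsMeeting P X).Finite :=
    fun X => hfinP.subset (partsMeeting_subset P X)
  intro n
  induction n with
  | zero =>
    intro C _ hCcard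
    have hspec : PartsMeeting P C = ∅ := (Set.ncard_eq_zero (hspecfin C)).1
      (Nat.le_zero.mp hCcard)
    have hCe : C = ∅ := by
      rw [Set.eq_empty_iff_forall_notMem]
      intro z hz
      obtain ⟨A, ⟨hA, hzA⟩, -⟩ := hP.2 z
      have : A ∈ PartsMeeting P C := ⟨hA, z, hzA, hz⟩
      simp [hspec] at this
    rw [hCe]; exact good_empty P
  | succ n IH =>
    intro C hCconv hCcard
    classical
    set I : Set (Set Z) :=
      {G | G ⊆ C ∧ (∀ a ∈ G, ∀ b ∈ C, b ≤ a → b ∈ G) ∧ Good P G} with hIdef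
    set G₀ : Set Z := ⋃₀ I with hG₀def
    have hG₀C : G₀ ⊆ C := Set.sUnion_subset fun G hG => hG.1
    have hG₀dc : ∀ a ∈ G₀, ∀ b ∈ C, b ≤ a → b ∈ G₀ := by
      rintro a ⟨G, hG, haG⟩ b hb hba
      exact ⟨G, hG, hG.2.1 a haG b hb hba⟩
    have hG₀conv : IsConvexSet G₀ := fun x y w hx hw hxy hyw =>
      hG₀dc w hw y (hCconv (hG₀C hx) (hG₀C hw) hxy hyw) hyw
    -- Step 1 : G₀ is good
    have hGoodG₀ : Good P G₀ := by
      rcases Set.eq_empty_or_nonempty G₀ with he | ⟨z₀, hz₀⟩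
      · rw [he]; exact good_empty P
      set S := {A ∈ PartsMeeting P G₀ | ∀ y ∈ G₀, ∃ d, d ∈ A ∧ d ∈ G₀ ∧ y ≤ d} with hSdef
      by_cases hS : PartsMeeting P G₀ ⊆ S
      · have hSne : (PartsMeeting P G₀).Nonempty := by
          obtain ⟨A, ⟨hA, hzA⟩, -⟩ := hP.2 z₀
          exact ⟨A, hA, z₀, hzA, hz₀⟩
        exact good_of_entangled hG₀conv (entangled_of_cofinal P G₀ (hspecfin _) hSne
          (fun A hA y hy => (hS hA).2 y hy))
      · obtain ⟨A₀, hA₀, hA₀S⟩ := Set.not_subset.mp hS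
        have hbd : ∀ A : Set Z, ∃ y : Z,
            A ∈ PartsMeeting P G₀ \ S → y ∈ G₀ ∧ ∀ d, d ∈ A → d ∈ G₀ → d < y := by
          intro A
          by_cases hA : A ∈ PartsMeeting P G₀ \ S
          · have hnc : ¬ (∀ y ∈ G₀, ∃ d, d ∈ A ∧ d ∈ G₀ ∧ y ≤ d) :=
              fun h => hA.2 ⟨hA.1, h⟩
            push_neg at hnc
            obtain ⟨y, hyG, hy⟩ := hnc
            exact ⟨y, fun _ => ⟨hyG, fun d hdA hdG => hy d hdA hdG⟩⟩
          · exact ⟨z₀, fun h => absurd h hA⟩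
        choose yb hyb using hbd
        have hDfin : (PartsMeeting P G₀ \ S).Finite := Set.Finite.diff (hspecfin G₀)
        have hDne : (PartsMeeting P G₀ \ S).Nonempty := ⟨A₀, hA₀, hA₀S⟩
        obtain ⟨Am, hAm, hmax⟩ := Set.exists_max_image _ yb hDfin hDne
        have hy'G : yb Am ∈ G₀ := (hyb Am hAm).1
        obtain ⟨G, hGI, hy'G'⟩ := hy'G
        set T := G₀ \ G with hTdef
        have hTlt : ∀ d ∈ T, yb Am < d := by
          rintro d ⟨hdG₀, hdG⟩
          by_contra h
          push_neg at h
          exact hdG (hGI.2.1 (yb Am) hy'G' d (hG₀C hdG₀) h)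
        have hTconv : IsConvexSet T := by
          rintro a b c ⟨haG₀, haG⟩ ⟨hcG₀, hcG⟩ hab hbc
          refine ⟨hG₀conv haG₀ hcG₀ hab hbc, fun hbG => haG ?_⟩
          exact hGI.2.1 b hbG a (hG₀C haG₀) hab
        have hTspec : PartsMeeting P T ⊆ S := by
          rintro B ⟨hBP, d, hdB, hdT⟩
          by_contra hBS
          have hBD : B ∈ PartsMeeting P G₀ \ S := ⟨⟨hBP, d, hdB, hdT.1⟩, hBS⟩
          have h1 : d < yb B := (hyb B hBD).2 d hdB hdT.1
          have h2 : yb B ≤ yb Am := hmax B hBD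
          exact absurd (hTlt d hdT) (not_lt.2 (h1.trans_le h2).le)
        have hScard : S.ncard ≤ n := by
          have h1 : S ⊂ PartsMeeting P C := by
            refine ⟨(Set.sep_subset _ _).trans (partsMeeting_mono P hG₀C), fun hsub => ?_⟩
            exact hA₀S (hsub (partsMeeting_mono P hG₀C hA₀))
          have := Set.ncard_lt_ncard h1 (hspecfin C)
          omega
        have hTcard : (PartsMeeting P T).ncard ≤ n :=
          le_trans (Set.ncard_le_ncard hTspec ((hspecfin G₀).subset (Set.sep_subset _ _)))
            hScard
        have hTgood := IH T hTconv hTcard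
        have hsplit : G ∪ T = G₀ := Set.union_diff_cancel (Set.subset_sUnion_of_mem hGI)
        rw [← hsplit]
        exact good_union Set.disjoint_sdiff_right hGI.2.2 hTgood
    -- Step 2 : G₀ = C
    have hCG₀ : C ⊆ G₀ := by
      by_contra hnc
      obtain ⟨z, hzC, hzG₀⟩ := Set.not_subset.mp hnc
      set R := C \ G₀ with hRdef
      have hRne : R.Nonempty := ⟨z, hzC, hzG₀⟩
      have hRconv : IsConvexSet R := by
        rintro a b c ⟨haC, haG⟩ ⟨hcC, hcG⟩ hab hbc
        exact ⟨hCconv haC hcC hab hbc, fun hbG => haG (hG₀dc b hbG a haC hab)⟩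
      have hext : ∀ B : Set Z, B ⊆ R → B.Nonempty →
          (∀ d ∈ B, ∀ b ∈ R, b ≤ d → b ∈ B) → Good P B → False := by
        rintro B hBR ⟨w, hwB⟩ hBdc hBgood
        have hdisj : Disjoint G₀ B :=
          Set.disjoint_sdiff_right.mono_right hBR
        have hmemI : (G₀ ∪ B) ∈ I := by
          refine ⟨Set.union_subset hG₀C (hBR.trans Set.diff_subset), ?_,
            good_union hdisj hGoodG₀ hBgood⟩
          rintro a (haG | haB) b hb hba
          · exact Or.inl (hG₀dc a haG b hb hba)
          · by_cases hbG : b ∈ G₀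
            · exact Or.inl hbG
            · exact Or.inr (hBdc a haB b ⟨hb, hbG⟩ hba)
        have : w ∈ G₀ := Set.subset_sUnion_of_mem hmemI (Or.inr hwB)
        exact (hBR hwB).2 this
      by_cases hmin : ∃ r ∈ R, ∀ d ∈ R, r ≤ d
      · obtain ⟨r, hrR, hrmin⟩ := hmin
        refine hext {r} (Set.singleton_subset_iff.2 hrR) ⟨r, rfl⟩ ?_ (good_singleton hP r)
        rintro d rfl b hbR hbd
        exact le_antisymm hbd (hrmin b hbR)
      · push_neg at hmin
        set S' := {A ∈ PartsMeeting P R | ∀ y ∈ R, ∃ d, d ∈ A ∧ d ∈ R ∧ d ≤ y} with hS'def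
        by_cases hS' : PartsMeeting P R ⊆ S'
        · have hSne' : (PartsMeeting P R).Nonempty := by
            obtain ⟨A, ⟨hA, hzA⟩, -⟩ := hP.2 z
            exact ⟨A, hA, z, hzA, hzC, hzG₀⟩
          have hRgood := good_of_entangled hRconv (entangled_of_coinitial P R (hspecfin _)
            hSne' (fun A hA y hy => (hS' hA).2 y hy))
          exact hext R subset_rfl hRne (fun d _ b hb _ => hb) hRgood
        · obtain ⟨A₀, hA₀, hA₀S⟩ := Set.not_subset.mp hS'
          have hbd : ∀ A : Set Z, ∃ y : Z,
              A ∈ PartsMeeting P R \ S' → y ∈ R ∧ ∀ d, d ∈ A → d ∈ R → y < d := by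
            intro A
            by_cases hA : A ∈ PartsMeeting P R \ S'
            · have hnc2 : ¬ (∀ y ∈ R, ∃ d, d ∈ A ∧ d ∈ R ∧ d ≤ y) :=
                fun h => hA.2 ⟨hA.1, h⟩
              push_neg at hnc2
              obtain ⟨y, hyR, hy⟩ := hnc2
              exact ⟨y, fun _ => ⟨hyR, fun d hdA hdR => hy d hdA hdR⟩⟩
            · exact ⟨z, fun h => absurd h hA⟩
          choose yb hyb using hbd
          have hDfin : (PartsMeeting P R \ S').Finite := Set.Finite.diff (hspecfin R)
          have hDne : (PartsMeeting P R \ S').Nonempty := ⟨A₀, hA₀, hA₀S⟩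
          obtain ⟨Am, hAm, hminim⟩ := Set.exists_min_image _ yb hDfin hDne
          have hy'R : yb Am ∈ R := (hyb Am hAm).1
          set B := {d ∈ R | d < yb Am} with hBdef
          have hBne : B.Nonempty := by
            obtain ⟨d, hdR, hd⟩ := hmin (yb Am) hy'R
            exact ⟨d, hdR, hd⟩
          have hBconv : IsConvexSet B := by
            rintro a b c ⟨haR, _⟩ ⟨hcR, hc⟩ hab hbc
            exact ⟨hRconv haR hcR hab hbc, lt_of_le_of_lt hbc hc⟩
          have hBdc : ∀ d ∈ B, ∀ b ∈ R, b ≤ d → b ∈ B := by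
            rintro d ⟨hdR, hd⟩ b hbR hbd
            exact ⟨hbR, lt_of_le_of_lt hbd hd⟩
          have hBspec : PartsMeeting P B ⊆ S' := by
            rintro E ⟨hEP, d, hdE, hdB⟩
            by_contra hES
            have hED : E ∈ PartsMeeting P R \ S' := ⟨⟨hEP, d, hdE, hdB.1⟩, hES⟩
            have h1 : yb E < d := (hyb E hED).2 d hdE hdB.1
            have h2 : yb Am ≤ yb E := hminim E hED
            exact absurd hdB.2 (not_lt.2 (h2.trans h1.le))
          have hScard : S'.ncard ≤ n := by
            have hRC : R ⊆ C := Set.diff_subset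
            have h1 : S' ⊂ PartsMeeting P C := by
              refine ⟨(Set.sep_subset _ _).trans (partsMeeting_mono P hRC), fun hsub => ?_⟩
              exact hA₀S (hsub (partsMeeting_mono P hRC hA₀))
            have := Set.ncard_lt_ncard h1 (hspecfin C)
            omega
          have hBcard : (PartsMeeting P B).ncard ≤ n :=
            le_trans (Set.ncard_le_ncard hBspec ((hspecfin R).subset (Set.sep_subset _ _)))
              hScard
          exact hext B (Set.sep_subset _ _) hBne hBdc (IH B hBconv hBcard)
    have hCeq : C = G₀ := le_antisymm hCG₀ hG₀C
    rw [hCeq]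
    exact hGoodG₀

end EntangledAux

/-- Every finite partition of a totally ordered set admits a finite entangled convex
decomposition: a finite partition into sets which are convex and entangled. -/
theorem exists_finite_entangled_convex_decomposition {Z : Type*} [LinearOrder Z]
    (P : Set (Set Z)) (hP : Setoid.IsPartition P) (hfin : P.Finite) :
    ∃ V : Set (Set Z), V.Finite ∧ Setoid.IsPartition V ∧
      ∀ W ∈ V, IsConvexSet W ∧ EntangledSet P W := by
  obtain ⟨V, hVfin, hVunion, hVdisj, hVprops⟩ :=
    EntangledAux.good_of_ncard_le hP hfin (PartsMeeting P Set.univ).ncard Set.univ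
      (fun x y z _ _ _ _ => Set.mem_univ y) le_rfl
  refine ⟨V, hVfin, ⟨?_, ?_⟩, fun W hW => hVprops W hW⟩
  · intro hmem
    exact Set.not_nonempty_empty (EntangledAux.EntangledSet.nonempty (hVprops ∅ hmem).2)
  · intro z
    have hz : z ∈ ⋃₀ V := hVunion.symm ▸ Set.mem_univ z
    obtain ⟨W, hWV, hzW⟩ := hz
    refine ⟨W, ⟨hWV, hzW⟩, ?_⟩
    rintro Y ⟨hYV, hzY⟩
    by_contra hne
    exact Set.disjoint_left.mp (hVdisj hYV hWV hne) hzY hzW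
end

section
/- Let B be a DFA. Then ent(B) ≤ width(B). -/
/-- A deterministic finite automaton with a (possibly partial) transition function,
a unique initial state and a set of final states. -/
structure PDFA (α : Type*) (σ : Type*) where
  step : σ → α → Option σ
  start : σ
  accept : Set σ

namespace PDFA

variable {α : Type*} {σ : Type*}

/-- The transition function extended to strings (read left to right). -/
def evalFrom (M : PDFA α σ) : σ → List α → Option σ
  | q, [] => some q
  | q, a :: w =>
    match M.step q a with
    | none => none
    | some q' => M.evalFrom q' w

/-- `δ(s, w)`. -/
def eval (M : PDFA α σ) (w : List α) : Option σ :=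
  M.evalFrom M.start w

/-- The language accepted by the automaton. -/
def language (M : PDFA α σ) : Set (List α) :=
  {w | ∃ q, M.eval w = some q ∧ q ∈ M.accept}

/-- `Pref(L(M))`: the set of prefixes of accepted words. -/
def prefLang (M : PDFA α σ) : Set (List α) :=
  {w | ∃ v, w ++ v ∈ M.language}

/-- `I_q`: the words of `Pref(L(M))` reaching state `q`. -/
def I (M : PDFA α σ) (q : σ) : Set (List α) :=
  {w | w ∈ M.prefLang ∧ M.eval w = some q}

/-- Every state is reachable from the initial state, and from every state a final
state can be reached. -/
def Trim (M : PDFA α σ) : Prop :=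
  (∀ q : σ, ∃ w : List α, M.eval w = some q) ∧
  (∀ q : σ, ∃ w : List α, ∃ q' : σ, M.evalFrom q w = some q' ∧ q' ∈ M.accept)

variable [LinearOrder α]

/-- A sequence of words which is monotone (non-decreasing or non-increasing) in the
co-lexicographic order (i.e., lexicographic order of the reversed words). -/
def MonotoneColex (x : ℕ → List α) : Prop :=
  (∀ i j : ℕ, i ≤ j → (x i).reverse ≤ (x j).reverse) ∨
  (∀ i j : ℕ, i ≤ j → (x j).reverse ≤ (x i).reverse)

/-- A set of states is entangled if a single monotone sequence of words of
`Pref(L(M))` reaches each of its states infinitely many times. -/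
def EntangledStates (M : PDFA α σ) (S : Set σ) : Prop :=
  ∃ x : ℕ → List α, (∀ i, x i ∈ M.prefLang) ∧ MonotoneColex x ∧
    ∀ q ∈ S, ∀ n : ℕ, ∃ i : ℕ, n ≤ i ∧ M.eval (x i) = some q

/-- `ent(M)`: the maximum cardinality of an entangled set of states. -/
noncomputable def ent (M : PDFA α σ) [Fintype σ] : ℕ :=
  sSup {n : ℕ | ∃ S : Finset σ, S.card = n ∧ M.EntangledStates ↑S}

/-- The strict co-lex partial order on states: `q₁ ≺ q₂` iff `q₁ ≠ q₂` and every word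
reaching `q₁` is co-lexicographically smaller than every word reaching `q₂`. -/
def stateLt (M : PDFA α σ) (q₁ q₂ : σ) : Prop :=
  q₁ ≠ q₂ ∧ ∀ u ∈ M.I q₁, ∀ v ∈ M.I q₂, u.reverse < v.reverse

/-- A set of states which is an antichain for the co-lex partial order. -/
def IsColexAntichain (M : PDFA α σ) (S : Set σ) : Prop :=
  ∀ q₁ ∈ S, ∀ q₂ ∈ S, q₁ ≠ q₂ → ¬ M.stateLt q₁ q₂ ∧ ¬ M.stateLt q₂ q₁

/-- `width(M)`: the maximum cardinality of a co-lex antichain of states. -/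
noncomputable def width (M : PDFA α σ) [Fintype σ] : ℕ :=
  sSup {n : ℕ | ∃ S : Finset σ, S.card = n ∧ M.IsColexAntichain ↑S}

/-- `V` is convex in `(Pref(L(M)), ⪯)`. -/
def ConvexIn (M : PDFA α σ) (V : Set (List α)) : Prop :=
  ∀ ⦃u v w : List α⦄, u ∈ V → w ∈ V → v ∈ M.prefLang →
    u.reverse ≤ v.reverse → v.reverse ≤ w.reverse → v ∈ V

/-- A set of words `V` is entangled in `M` if some monotone sequence of elements of `V`
passes through each state occurring in `V` infinitely many times. -/
def EntangledWords (M : PDFA α σ) (V : Set (List α)) : Prop :=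
  ∃ x : ℕ → List α, (∀ i, x i ∈ V) ∧ MonotoneColex x ∧
    ∀ q : σ, (∃ w ∈ V, M.eval w = some q) →
      ∀ n : ℕ, ∃ i : ℕ, n ≤ i ∧ M.eval (x i) = some q

/-- An entangled convex (e.c.) decomposition of `M`: a partition of `Pref(L(M))` into
convex, entangled sets. -/
def IsECD (M : PDFA α σ) (V : Set (Set (List α))) : Prop :=
  (⋃₀ V) = M.prefLang ∧ V.Pairwise Disjoint ∧
    ∀ W ∈ V, M.ConvexIn W ∧ M.EntangledWords W

/-- A minimum-size e.c. decomposition: a finite e.c. decomposition of minimum cardinality. -/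
def IsMinECD (M : PDFA α σ) (V : Set (Set (List α))) : Prop :=
  V.Finite ∧ M.IsECD V ∧
    ∀ V' : Set (Set (List α)), V'.Finite → M.IsECD V' → V.ncard ≤ V'.ncard

/-- The equivalence relation `∼_𝒱`: two words are equivalent iff they reach the same state
and every element of `𝒱` lying strictly co-lexicographically between them intersects `I_q`. -/
def simV (M : PDFA α σ) (V : Set (Set (List α))) (u v : List α) : Prop :=
  M.eval u = M.eval v ∧
  ∀ W ∈ V,
    (∀ w ∈ W, min u.reverse v.reverse < w.reverse ∧ w.reverse < max u.reverse v.reverse) →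
    ∃ w ∈ W, M.eval w = M.eval u

/-- The decomposition-free characterization of `∼`: the two words reach the same state and
the co-lex interval between them is covered by finitely many convex sets, each entangled in
`M` and intersecting `I_q`. -/
def simR (M : PDFA α σ) (u v : List α) : Prop :=
  M.eval u = M.eval v ∧
  ∃ (n : ℕ) (C : Fin n → Set (List α)),
    (∀ i, C i ⊆ M.prefLang ∧ M.ConvexIn (C i) ∧ M.EntangledWords (C i) ∧
      ∃ w ∈ C i, M.eval w = M.eval u) ∧
    ∀ w ∈ M.prefLang,
      min u.reverse v.reverse ≤ w.reverse → w.reverse ≤ max u.reverse v.reverse →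
      w ∈ ⋃ i, C i

end PDFA

/-- Lemma: for every (trim) DFA, the entanglement number is at most the width. -/
theorem ent_le_width {α σ : Type*} [LinearOrder α] [Fintype σ]
    (M : PDFA α σ) (hM : M.Trim) :
    M.ent ≤ M.width := by
  have key : ∀ S : Finset σ, M.EntangledStates ↑S → M.IsColexAntichain ↑S := by
    rintro S ⟨x, hpref, hmono, hvis⟩
    have main : ∀ a b : σ, a ∈ (↑S : Set σ) → b ∈ (↑S : Set σ) → a ≠ b →
        ¬ M.stateLt a b := by
      rintro a b ha hb hab ⟨-, hlt⟩
      obtain ⟨i, -, hi⟩ := hvis b hb 0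
      obtain ⟨j, hij, hj⟩ := hvis a ha (i + 1)
      obtain ⟨k, hjk, hk⟩ := hvis b hb (j + 1)
      rcases hmono with hm | hm
      · exact absurd (hm i j (by omega))
          (not_le.2 (hlt (x j) ⟨hpref j, hj⟩ (x i) ⟨hpref i, hi⟩))
      · exact absurd (hm j k (by omega))
          (not_le.2 (hlt (x j) ⟨hpref j, hj⟩ (x k) ⟨hpref k, hk⟩))
    intro q₁ hq₁ q₂ hq₂ hne
    exact ⟨main q₁ q₂ hq₁ hq₂ hne, main q₂ q₁ hq₂ hq₁ hne.symm⟩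
  unfold PDFA.ent PDFA.width
  have hbdd : BddAbove {n : ℕ | ∃ S : Finset σ, S.card = n ∧ M.IsColexAntichain ↑S} := by
    refine ⟨Fintype.card σ, ?_⟩
    rintro n ⟨S, rfl, -⟩
    simpa using S.card_le_univ
  rcases Set.eq_empty_or_nonempty
      {n : ℕ | ∃ S : Finset σ, S.card = n ∧ M.EntangledStates ↑S} with h | h
  · simp [h]
  · exact csSup_le_csSup hbdd h (fun n ⟨S, hc, hE⟩ => ⟨S, hc, key S hE⟩)
end

section
/- If A is the minimum DFA recognizing a regular language L, then ent(A) = ent(L); that is, ent(A) ≤ ent(B) for every DFA B with L(B) = L. -/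
namespace PDFA

variable {α : Type*} {σ : Type*}

theorem evalFrom_cons (M : PDFA α σ) (q : σ) (a : α) (w : List α) :
    M.evalFrom q (a :: w) = (M.step q a).bind fun p => M.evalFrom p w := by
  cases h : M.step q a <;> simp [evalFrom, h]

theorem evalFrom_append' (M : PDFA α σ) (q : σ) (u v : List α) :
    M.evalFrom q (u ++ v) = (M.evalFrom q u).bind fun p => M.evalFrom p v := by
  induction u generalizing q with
  | nil => simp [evalFrom]
  | cons a u ih =>
      rw [List.cons_append, evalFrom_cons, evalFrom_cons]
      cases M.step q a with
      | none => rfl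
      | some p => exact ih p

/-- The right language of a state. -/
def Rlang (M : PDFA α σ) (q : σ) : Set (List α) :=
  {w | ∃ f, M.evalFrom q w = some f ∧ f ∈ M.accept}

theorem mem_Rlang_iff (M : PDFA α σ) {u : List α} {q : σ} (h : M.eval u = some q)
    (z : List α) : z ∈ M.Rlang q ↔ u ++ z ∈ M.language := by
  unfold Rlang language
  simp only [Set.mem_setOf_eq, eval, evalFrom_append']
  rw [show M.evalFrom M.start u = some q from h]
  rfl

theorem nil_mem_Rlang_iff (M : PDFA α σ) (q : σ) : [] ∈ M.Rlang q ↔ q ∈ M.accept := by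
  unfold Rlang
  simp [evalFrom]

theorem cons_mem_Rlang_iff (M : PDFA α σ) {q y : σ} {a : α} (h : M.step q a = some y)
    (w : List α) : a :: w ∈ M.Rlang q ↔ w ∈ M.Rlang y := by
  unfold Rlang
  simp only [Set.mem_setOf_eq, evalFrom, h]

theorem not_cons_mem_Rlang (M : PDFA α σ) {q : σ} {a : α} (h : M.step q a = none)
    (w : List α) : a :: w ∉ M.Rlang q := by
  unfold Rlang
  simp [evalFrom, h]

theorem eval_of_mem_prefLang (M : PDFA α σ) {w : List α} (h : w ∈ M.prefLang) :
    ∃ q, M.eval w = some q := by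
  obtain ⟨v, q, hq, _⟩ := h
  rw [eval, evalFrom_append'] at hq
  cases hw : M.evalFrom M.start w with
  | none => rw [hw] at hq; simp at hq
  | some p => exact ⟨p, hw⟩

/-- Myhill–Nerode style minimality: in a minimum trim DFA, states with equal
right languages coincide. -/
theorem nerode {σ : Type*} [Fintype σ] (A : PDFA α σ) (hA : A.Trim)
    (hmin : ∀ (m : ℕ) (D : PDFA α (Fin m)), D.Trim → D.language = A.language →
      Fintype.card σ ≤ m) {q₁ q₂ : σ} (h : A.Rlang q₁ = A.Rlang q₂) : q₁ = q₂ := by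
  classical
  by_contra hne
  set s : Setoid σ := ⟨fun p q => A.Rlang p = A.Rlang q,
    ⟨fun _ => rfl, Eq.symm, Eq.trans⟩⟩ with hs
  have hrel : ∀ p q : σ, (s.r p q ↔ A.Rlang p = A.Rlang q) := fun p q => Iff.rfl
  set m := Fintype.card (Quotient s) with hm
  set e : Quotient s ≃ Fin m := Fintype.equivFin (Quotient s) with he
  -- acceptance is well defined on classes
  have hacc : ∀ p q : σ, A.Rlang p = A.Rlang q → (p ∈ A.accept ↔ q ∈ A.accept) := by
    intro p q hpq
    rw [← nil_mem_Rlang_iff, ← nil_mem_Rlang_iff, hpq]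
  -- transitions are well defined on classes
  have key : ∀ p q : σ, A.Rlang p = A.Rlang q → ∀ a y, A.step p a = some y →
      ∃ y', A.step q a = some y' ∧ A.Rlang y = A.Rlang y' := by
    intro p q hpq a y hy
    obtain ⟨w, f, hw, hf⟩ := hA.2 y
    have hwy : w ∈ A.Rlang y := ⟨f, hw, hf⟩
    have h1 : a :: w ∈ A.Rlang q := by
      rw [← hpq, cons_mem_Rlang_iff A hy]; exact hwy
    cases hq : A.step q a with
    | none => exact absurd h1 (not_cons_mem_Rlang A hq w)
    | some y' =>
        refine ⟨y', rfl, ?_⟩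
        ext z
        rw [← cons_mem_Rlang_iff A hy z, ← cons_mem_Rlang_iff A hq z, hpq]
  have hstepcl : ∀ p q : σ, A.Rlang p = A.Rlang q → ∀ a,
      (A.step p a).map (fun y => e ⟦y⟧) = (A.step q a).map (fun y => e ⟦y⟧) := by
    intro p q hpq a
    cases hp : A.step p a with
    | none =>
        cases hq : A.step q a with
        | none => rfl
        | some y' =>
            obtain ⟨y, hy, _⟩ := key q p hpq.symm a y' hq
            rw [hp] at hy; exact absurd hy (by simp)
    | some y =>
        obtain ⟨y', hy', hR⟩ := key p q hpq a y hp
        rw [hy']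
        simp only [Option.map_some]
        congr 1
        exact congrArg e (Quotient.sound hR)
  -- the quotient automaton
  set D : PDFA α (Fin m) :=
    { step := fun i a => (A.step (e.symm i).out a).map (fun y => e ⟦y⟧)
      start := e ⟦A.start⟧
      accept := {i | (e.symm i).out ∈ A.accept} } with hD
  have hout : ∀ r : σ, A.Rlang ((e.symm (e ⟦r⟧)).out) = A.Rlang r := by
    intro r
    have h1 : e.symm (e ⟦r⟧) = ⟦r⟧ := e.symm_apply_apply _
    have h2 : (⟦r⟧ : Quotient s).out ≈ r := Quotient.mk_out r
    rw [h1]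
    exact h2
  have hstepD : ∀ (r : σ) (a : α),
      D.step (e ⟦r⟧) a = (A.step r a).map (fun y => e ⟦y⟧) := by
    intro r a
    show (A.step (e.symm (e ⟦r⟧)).out a).map (fun y => e ⟦y⟧) = _
    exact hstepcl _ _ (hout r) a
  have hevalD : ∀ (w : List α) (r : σ),
      D.evalFrom (e ⟦r⟧) w = (A.evalFrom r w).map (fun y => e ⟦y⟧) := by
    intro w
    induction w with
    | nil => intro r; rfl
    | cons a w ih =>
        intro r
        rw [evalFrom_cons, evalFrom_cons, hstepD r a]
        cases hr : A.step r a with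
        | none => rfl
        | some y => exact ih y
  have hevalD' : ∀ w : List α, D.eval w = (A.eval w).map (fun y => e ⟦y⟧) :=
    fun w => hevalD w A.start
  have haccD : ∀ r : σ, e ⟦r⟧ ∈ D.accept ↔ r ∈ A.accept := by
    intro r
    exact hacc _ _ (hout r)
  have hlang : D.language = A.language := by
    ext w
    constructor
    · rintro ⟨i, hi, hacc'⟩
      rw [hevalD'] at hi
      cases hw : A.eval w with
      | none => rw [hw] at hi; exact absurd hi (by simp)
      | some r =>
          rw [hw] at hi
          simp only [Option.map_some, Option.some.injEq] at hi
          exact ⟨r, hw, (haccD r).mp (hi ▸ hacc')⟩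
    · rintro ⟨r, hr, hacc'⟩
      exact ⟨e ⟦r⟧, by rw [hevalD', hr]; rfl, (haccD r).mpr hacc'⟩
  have hfix : ∀ i : Fin m, e ⟦(e.symm i).out⟧ = i := by
    intro i
    rw [Quotient.out_eq, e.apply_symm_apply]
  have htrim : D.Trim := by
    constructor
    · intro i
      obtain ⟨w, hw⟩ := hA.1 (e.symm i).out
      exact ⟨w, by rw [hevalD', hw, Option.map_some, hfix i]⟩
    · intro i
      obtain ⟨w, f, hw, hf⟩ := hA.2 (e.symm i).out
      refine ⟨w, e ⟦f⟧, ?_, (haccD f).mpr hf⟩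
      rw [← hfix i, hevalD, hw, Option.map_some]
  have hcard := hmin m D htrim hlang
  have hlt : m < Fintype.card σ := by
    refine Fintype.card_lt_of_surjective_not_injective (Quotient.mk s) ?_ ?_
    · exact Quotient.mk_surjective
    · intro hinj
      exact hne (hinj (Quotient.sound h))
  omega

end PDFA


/-- Lemma: the entanglement of a regular language is realized by its minimum DFA:
if `A` is the minimum DFA recognizing `L`, then `ent(A) ≤ ent(B)` for every DFA `B`
recognizing `L`. -/
theorem ent_minimal_of_minimum_dfa {α : Type*} [LinearOrder α] {σ σ' : Type*}
    [Fintype σ] [Fintype σ'] (A : PDFA α σ) (hA : A.Trim)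
    (hmin : ∀ (m : ℕ) (D : PDFA α (Fin m)), D.Trim → D.language = A.language →
      Fintype.card σ ≤ m)
    (B : PDFA α σ') (hB : B.Trim) (hL : B.language = A.language) :
    A.ent ≤ B.ent := by
  classical
  have hpref : B.prefLang = A.prefLang := by unfold PDFA.prefLang; rw [hL]
  have hsetB_bdd : BddAbove {n | ∃ S : Finset σ', S.card = n ∧ B.EntangledStates ↑S} := by
    refine ⟨Fintype.card σ', ?_⟩
    rintro n ⟨S, hc, -⟩
    exact hc ▸ S.card_le_univ
  unfold PDFA.ent
  rcases Set.eq_empty_or_nonempty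
      {n : ℕ | ∃ S : Finset σ, S.card = n ∧ A.EntangledStates ↑S} with hemp | hne
  · rw [hemp, csSup_empty]; exact Nat.zero_le _
  refine csSup_le_csSup hsetB_bdd hne ?_
  rintro n ⟨S, hcard, x, hxpref, hmono, hhit⟩
  have hxprefB : ∀ i, x i ∈ B.prefLang := fun i => by rw [hpref]; exact hxpref i
  have hevalB : ∀ i, ∃ q', B.eval (x i) = some q' :=
    fun i => B.eval_of_mem_prefLang (hxprefB i)
  -- residual argument: same B-state implies same A-state
  have hres : ∀ u v : List α, u ∈ A.prefLang → v ∈ A.prefLang →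
      B.eval u = B.eval v → A.eval u = A.eval v := by
    intro u v hu hv huv
    obtain ⟨p, hp⟩ := A.eval_of_mem_prefLang hu
    obtain ⟨r, hr⟩ := A.eval_of_mem_prefLang hv
    obtain ⟨q', hq'⟩ := B.eval_of_mem_prefLang (by rw [hpref]; exact hu)
    have hq'' : B.eval v = some q' := by rw [← huv]; exact hq'
    have hR : A.Rlang p = A.Rlang r := by
      ext z
      rw [A.mem_Rlang_iff hp, A.mem_Rlang_iff hr, ← hL,
        ← B.mem_Rlang_iff hq', ← B.mem_Rlang_iff hq'']
    rw [hp, hr, PDFA.nerode A hA hmin hR]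
  -- for each q in S, find a B-state visited infinitely often together with q
  have claim : ∀ q ∈ S, ∃ q' : σ', ∀ k : ℕ, ∃ i, k ≤ i ∧
      A.eval (x i) = some q ∧ B.eval (x i) = some q' := by
    intro q hq
    have hIq : {i : ℕ | A.eval (x i) = some q}.Infinite := by
      intro hfin
      obtain ⟨b, hb⟩ := hfin.bddAbove
      obtain ⟨i, hi, hqi⟩ := hhit q hq (b + 1)
      have := hb hqi
      omega
    haveI := hIq.to_subtype
    obtain ⟨y, hy⟩ := Finite.exists_infinite_fiber
      (fun i : {i : ℕ | A.eval (x i) = some q} => B.eval (x i.val))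
    haveI := hy
    obtain ⟨⟨i₀, hi₀⟩, hy₀⟩ := (Infinite.nonempty _ : Nonempty
      ((fun i : {i : ℕ | A.eval (x i) = some q} => B.eval (x i.val)) ⁻¹' {y}))
    obtain ⟨q', hq'⟩ := hevalB i₀
    have hyq : y = some q' := by
      have h1 : B.eval (x i₀) = y := hy₀
      rw [← h1, hq']
    refine ⟨q', ?_⟩
    have hJ : {i : ℕ | A.eval (x i) = some q ∧ B.eval (x i) = some q'}.Infinite := by
      have hinjval : Function.Injective
          (fun j : ((fun i : {i : ℕ | A.eval (x i) = some q} =>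
              B.eval (x i.val)) ⁻¹' {y}) =>
            (⟨j.val.val, j.val.property, by
              have hj : B.eval (x j.val.val) = y := j.property
              exact hj.trans hyq⟩ :
              {i : ℕ | A.eval (x i) = some q ∧ B.eval (x i) = some q'})) := by
        intro a b hab
        have h2 : (a.val.val : ℕ) = b.val.val := by simpa using hab
        exact Subtype.ext (Subtype.ext h2)
      have : Infinite {i : ℕ | A.eval (x i) = some q ∧ B.eval (x i) = some q'} :=
        Infinite.of_injective _ hinjval
      exact Set.infinite_coe_iff.mp this
    intro k
    obtain ⟨i, hi, hik⟩ := hJ.exists_gt k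
    exact ⟨i, le_of_lt hik, hi⟩
  rcases S.eq_empty_or_nonempty with hSe | hSne
  · refine ⟨∅, ?_, x, hxprefB, hmono, ?_⟩
    · rw [← hcard, hSe]; rfl
    · intro q hq; simp at hq
  obtain ⟨q₀, hq₀⟩ := hSne
  obtain ⟨q₀', -⟩ := claim q₀ hq₀
  haveI : Nonempty σ' := ⟨q₀'⟩
  set g : σ → σ' := fun q =>
    if h : ∃ q' : σ', ∀ k : ℕ, ∃ i, k ≤ i ∧
        A.eval (x i) = some q ∧ B.eval (x i) = some q' then h.choose
    else Classical.arbitrary σ' with hg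
  have hgspec : ∀ q ∈ S, ∀ k : ℕ, ∃ i, k ≤ i ∧
      A.eval (x i) = some q ∧ B.eval (x i) = some (g q) := by
    intro q hq
    have hcl := claim q hq
    rw [hg]
    simp only [dif_pos hcl]
    exact hcl.choose_spec
  have hinj : Set.InjOn g ↑S := by
    intro q₁ h₁ q₂ h₂ heq
    obtain ⟨i, -, hAi, hBi⟩ := hgspec q₁ h₁ 0
    obtain ⟨j, -, hAj, hBj⟩ := hgspec q₂ h₂ 0
    have hBij : B.eval (x i) = B.eval (x j) := by rw [hBi, hBj, heq]
    have := hres (x i) (x j) (hxpref i) (hxpref j) hBij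
    rw [hAi, hAj] at this
    exact Option.some_injective σ this
  refine ⟨S.image g, ?_, x, hxprefB, hmono, ?_⟩
  · rw [Finset.card_image_of_injOn hinj, hcard]
  · intro q' hq' k
    rw [Finset.coe_image] at hq'
    obtain ⟨q, hq, rfl⟩ := hq'
    obtain ⟨i, hik, -, hBi⟩ := hgspec q hq k
    exact ⟨i, hik, hBi⟩
end

section
/- Let B be a DFA and let V be a minimum-size e.c. decomposition of B. Then the equivalence relation ∼_V has finitely many classes on Pref(L(B)), and L(B) is a union of ∼_V-classes. -/
/-- Key lemma: if `u, u'` lie in the same element of the decomposition and reach the same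
state, then anything `∼_V`-related to `u` is `∼_V`-related to `u'`. -/
lemma PDFA.simV_transfer {α σ : Type*} [LinearOrder α] (M : PDFA α σ)
    (V : Set (Set (List α))) (hunion : ⋃₀ V = M.prefLang) (hdisj : V.Pairwise Disjoint)
    (hconv : ∀ W ∈ V, M.ConvexIn W)
    {W₀ : Set (List α)} (hW₀ : W₀ ∈ V) {u u' v : List α}
    (hu : u ∈ W₀) (hu' : u' ∈ W₀) (he : M.eval u = M.eval u')
    (hsim : M.simV V u v) : M.simV V u' v := by
  obtain ⟨he1, h2⟩ := hsim
  refine ⟨he ▸ he1, ?_⟩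
  intro W hW hbet
  by_cases hall : ∀ w ∈ W,
      min u.reverse v.reverse < w.reverse ∧ w.reverse < max u.reverse v.reverse
  · obtain ⟨w, hw, hew⟩ := h2 W hW hall
    exact ⟨w, hw, he ▸ hew⟩
  · push_neg at hall
    obtain ⟨w₀, hw₀, hbad⟩ := hall
    have hw₀pref : w₀ ∈ M.prefLang := by
      have : w₀ ∈ ⋃₀ V := ⟨W, hW, hw₀⟩
      rwa [hunion] at this
    obtain ⟨hlo, hhi⟩ := hbet w₀ hw₀
    have hWW₀ : W = W₀ := by
      by_contra hne
      have hd := hdisj hW hW₀ hne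
      have hw₀W₀ : w₀ ∈ W₀ := by
        rcases le_or_gt w₀.reverse (min u.reverse v.reverse) with hle | hlt
        · -- w₀ ≤ min u v, so u' < w₀ ≤ u
          have h1 : u'.reverse < w₀.reverse := by
            by_contra h
            push_neg at h
            exact absurd hlo (not_lt.2 (le_min h (hle.trans (min_le_right _ _))))
          exact (hconv W₀ hW₀) hu' hu hw₀pref h1.le (hle.trans (min_le_left _ _))
        · -- min u v < w₀, so max u v ≤ w₀, so u ≤ w₀ < u'
          have hge : max u.reverse v.reverse ≤ w₀.reverse := hbad hlt
          have h1 : w₀.reverse < u'.reverse := by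
            by_contra h
            push_neg at h
            exact absurd hhi (not_lt.2 (max_le h ((le_max_right _ _).trans hge)))
          exact (hconv W₀ hW₀) hu hu' hw₀pref ((le_max_left _ _).trans hge) h1.le
      exact Set.disjoint_left.mp hd hw₀ hw₀W₀
    exact ⟨u', hWW₀ ▸ hu', rfl⟩

/-- Lemma: for a minimum-size e.c. decomposition `V` of a (trim) DFA, `∼_V` has finitely
many classes on `Pref(L(B))` and `L(B)` is a union of `∼_V`-classes. -/
theorem simV_finite_index_and_saturates {α σ : Type*} [LinearOrder α] [Fintype σ]
    (M : PDFA α σ) (hM : M.Trim)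
    (V : Set (Set (List α))) (hV : M.IsMinECD V) :
    {C : Set (List α) | ∃ u ∈ M.prefLang, C = {v | v ∈ M.prefLang ∧ M.simV V u v}}.Finite ∧
    ∀ u ∈ M.prefLang, ∀ v ∈ M.prefLang, M.simV V u v →
      (u ∈ M.language ↔ v ∈ M.language) := by
  obtain ⟨hVfin, ⟨hunion, hdisj, hmem⟩, _⟩ := hV
  have hconv : ∀ W ∈ V, M.ConvexIn W := fun W hW => (hmem W hW).1
  constructor
  · -- finitely many classes
    have hsub : {C : Set (List α) | ∃ u ∈ M.prefLang,
        C = {v | v ∈ M.prefLang ∧ M.simV V u v}} ⊆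
        (fun p : Option σ × Set (List α) =>
          {v | v ∈ M.prefLang ∧ ∀ u, u ∈ M.prefLang → M.eval u = p.1 → u ∈ p.2 →
            M.simV V u v}) '' (Set.univ ×ˢ V) := by
      rintro C ⟨u₀, hu₀, rfl⟩
      have hu₀' : u₀ ∈ ⋃₀ V := by rwa [hunion]
      obtain ⟨W₀, hW₀, hu₀W₀⟩ := hu₀'
      refine ⟨(M.eval u₀, W₀), ⟨Set.mem_univ _, hW₀⟩, ?_⟩
      ext v
      simp only [Set.mem_setOf_eq]
      constructor
      · rintro ⟨hv, hall⟩
        exact ⟨hv, hall u₀ hu₀ rfl hu₀W₀⟩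
      · rintro ⟨hv, hsim⟩
        refine ⟨hv, fun u hu heu huW₀ => ?_⟩
        exact M.simV_transfer V hunion hdisj hconv hW₀ hu₀W₀ huW₀ heu.symm hsim
    exact Set.Finite.subset ((Set.finite_univ.prod hVfin).image _) hsub
  · -- language is saturated
    intro u _ v _ hsim
    have he : M.eval u = M.eval v := hsim.1
    simp only [PDFA.language, Set.mem_setOf_eq, he]
end

section
/- Let B be a DFA and let V be a minimum-size e.c. decomposition of B. Then for all α, α' ∈ Pref(L(B)): α ∼_V α' if and only if δ(s,α) = δ(s,α') and the co-lex interval [α, α']^± is contained in a finite union of convex, entangled sets C_1, …, C_n ⊆ Pref(L(B)) with C_i ∩ I_{δ(s,α)} ≠ ∅ for all i = 1, …, n. In particular, the relation ∼_V does not depend on the choice of the minimum-size e.c. decomposition V. -/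
section AuxLemmas

open PDFA

variable {α : Type*} {σ : Type*}

lemma myEvalFrom_append (M : PDFA α σ) (q : σ) (u w : List α) :
    M.evalFrom q (u ++ w) = (M.evalFrom q u).bind (fun p => M.evalFrom p w) := by
  induction u generalizing q with
  | nil => simp [PDFA.evalFrom]
  | cons a u ih =>
    simp only [List.cons_append, PDFA.evalFrom]
    cases M.step q a with
    | none => simp
    | some q' => simpa using ih q'

lemma myEval_isSome (M : PDFA α σ) {w : List α} (hw : w ∈ M.prefLang) :
    ∃ q, M.eval w = some q := by
  obtain ⟨v, q', hq', -⟩ := hw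
  have h := myEvalFrom_append M M.start w v
  rw [show M.evalFrom M.start (w ++ v) = M.eval (w ++ v) from rfl, hq'] at h
  cases heq : M.eval w with
  | none => rw [show M.evalFrom M.start w = M.eval w from rfl, heq] at h; simp at h
  | some p => exact ⟨p, rfl⟩

lemma part_unique {V : Set (Set (List α))} (hdis : V.Pairwise Disjoint)
    {R R' : Set (List α)} (hR : R ∈ V) (hR' : R' ∈ V) {w : List α}
    (h1 : w ∈ R) (h2 : w ∈ R') : R = R' := by
  by_contra hne
  exact Set.disjoint_left.mp (hdis hR hR' hne) h1 h2

variable [LinearOrder α]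

/-- Pigeonhole + convexity: a monotone sequence of words of `Pref(L(M))` covered by
finitely many convex sets eventually stays in one of them. -/
lemma tail_in_convex (M : PDFA α σ) {x : ℕ → List α} (hx : ∀ t, x t ∈ M.prefLang)
    (hm : MonotoneColex x) {ι : Type*} (I : Finset ι) (C : ι → Set (List α))
    (hconv : ∀ i ∈ I, M.ConvexIn (C i)) (hcov : ∀ t, ∃ i ∈ I, x t ∈ C i) :
    ∃ i ∈ I, ∃ T, ∀ t, T ≤ t → x t ∈ C i := by
  have hinf : ∃ i ∈ I, {t | x t ∈ C i}.Infinite := by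
    by_contra h
    push_neg at h
    have hsub : (Set.univ : Set ℕ) ⊆ ⋃ i ∈ I, {t | x t ∈ C i} := by
      intro t _
      obtain ⟨i, hi, hti⟩ := hcov t
      exact Set.mem_biUnion hi hti
    exact Set.infinite_univ ((Set.Finite.biUnion I.finite_toSet (fun i hi => h i hi)).subset hsub)
  obtain ⟨i, hiI, hinf⟩ := hinf
  obtain ⟨t0, ht0⟩ := hinf.nonempty
  refine ⟨i, hiI, t0, fun t ht => ?_⟩
  obtain ⟨t2, ht2s, ht2⟩ := hinf.exists_gt t
  rcases hm with h | h
  · exact hconv i hiI ht0 ht2s (hx t) (h t0 t ht) (h t t2 ht2.le)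
  · exact hconv i hiI ht2s ht0 (hx t) (h t t2 ht2.le) (h t0 t ht)

/-- The core equivalence: for any minimum-size e.c. decomposition `V`,
`simV V` agrees with the decomposition-free relation `simR`. -/
theorem main_simV_iff_simR (M : PDFA α σ)
    (V : Set (Set (List α))) (hV : M.IsMinECD V)
    (u v : List α) (hu : u ∈ M.prefLang) (hv : v ∈ M.prefLang) :
    M.simV V u v ↔ M.simR u v := by
  classical
  obtain ⟨hVfin, ⟨hVun, hVdis, hVmem⟩, hVmin⟩ := hV
  obtain ⟨q, hq⟩ := myEval_isSome M hu
  have hmemPref : ∀ {w : List α}, w ∈ M.prefLang → ∃ R ∈ V, w ∈ R := by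
    intro w hw
    have : w ∈ ⋃₀ V := by rw [hVun]; exact hw
    exact this
  have hmemPref' : ∀ {w : List α} {R : Set (List α)}, R ∈ V → w ∈ R → w ∈ M.prefLang := by
    intro w R hR hw
    rw [← hVun]; exact ⟨R, hR, hw⟩
  constructor
  · rintro ⟨heval, hsim⟩
    refine ⟨heval, ?_⟩
    obtain ⟨m, hmP, hme, hmm⟩ : ∃ m, m ∈ M.prefLang ∧ M.eval m = M.eval u ∧
        min u.reverse v.reverse = m.reverse := by
      rcases le_total u.reverse v.reverse with h | h
      · exact ⟨u, hu, rfl, min_eq_left h⟩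
      · exact ⟨v, hv, heval.symm, min_eq_right h⟩
    obtain ⟨mx, hmxP, hmxe, hmxx⟩ : ∃ m, m ∈ M.prefLang ∧ M.eval m = M.eval u ∧
        max u.reverse v.reverse = m.reverse := by
      rcases le_total u.reverse v.reverse with h | h
      · exact ⟨v, hv, heval.symm, max_eq_right h⟩
      · exact ⟨u, hu, rfl, max_eq_left h⟩
    set Pd : Set (List α) → Prop := fun W =>
      ∃ w ∈ W, min u.reverse v.reverse ≤ w.reverse ∧ w.reverse ≤ max u.reverse v.reverse
      with hPd
    have hmeets : ∀ W ∈ V, Pd W → ∃ w ∈ W, M.eval w = M.eval u := by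
      rintro W hW ⟨w0, hw0W, hw0l, hw0r⟩
      by_cases hall : ∀ w ∈ W, min u.reverse v.reverse < w.reverse ∧
          w.reverse < max u.reverse v.reverse
      · exact hsim W hW hall
      · push_neg at hall
        obtain ⟨w1, hw1W, hw1⟩ := hall
        by_cases hcase : min u.reverse v.reverse < w1.reverse
        · have h2 : max u.reverse v.reverse ≤ w1.reverse := hw1 hcase
          have : mx ∈ W := (hVmem W hW).1 hw0W hw1W hmxP (hmxx ▸ hw0r) (hmxx ▸ h2)
          exact ⟨mx, this, hmxe⟩
        · have h2 : w1.reverse ≤ min u.reverse v.reverse := le_of_not_gt hcase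
          have : m ∈ W := (hVmem W hW).1 hw1W hw0W hmP (hmm ▸ h2) (hmm ▸ hw0l)
          exact ⟨m, this, hme⟩
    obtain ⟨N, f, hfr⟩ := hVfin.fin_embedding
    have hfV : ∀ i, (f i : Set (List α)) ∈ V := fun i => hfr ▸ ⟨i, rfl⟩
    refine ⟨N, fun i => if Pd (f i) then f i else {u}, ?_, ?_⟩
    · intro i
      by_cases hPi : Pd (f i)
      · simp only [if_pos hPi]
        exact ⟨fun w hw => hmemPref' (hfV i) hw, (hVmem _ (hfV i)).1,
          (hVmem _ (hfV i)).2, hmeets _ (hfV i) hPi⟩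
      · simp only [if_neg hPi]
        refine ⟨?_, ?_, ?_, ⟨u, rfl, rfl⟩⟩
        · intro w hw
          rw [Set.mem_singleton_iff] at hw
          exact hw ▸ hu
        · intro a b c ha hc hb h1 h2
          rw [Set.mem_singleton_iff] at ha hc ⊢
          subst ha; subst hc
          exact List.reverse_injective (le_antisymm h2 h1)
        · refine ⟨fun _ => u, fun _ => rfl, Or.inl (fun _ _ _ => le_rfl), ?_⟩
          rintro q' ⟨w, hw, hwq⟩ n0
          rw [Set.mem_singleton_iff] at hw
          exact ⟨n0, le_rfl, hw ▸ hwq⟩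
    · intro w hwP h1 h2
      obtain ⟨R, hRV, hwR⟩ := hmemPref hwP
      obtain ⟨i, hfi⟩ : ∃ i, (f i : Set (List α)) = R := by
        have : R ∈ Set.range f := hfr.symm ▸ hRV
        exact this
      have hPfi : Pd (f i) := ⟨w, hfi.symm ▸ hwR, h1, h2⟩
      rw [Set.mem_iUnion]
      exact ⟨i, by simp only [if_pos hPfi]; exact hfi.symm ▸ hwR⟩
  · rintro ⟨heval, n, C, hC, hcov⟩
    refine ⟨heval, ?_⟩
    intro W hW hstrict
    obtain ⟨ω, hωW, hωmono, hωhit⟩ := (hVmem W hW).2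
    have hωP : ∀ t, ω t ∈ M.prefLang := fun t => hmemPref' hW (hωW t)
    have hωcov : ∀ t, ∃ i ∈ (Finset.univ : Finset (Fin n)), ω t ∈ C i := by
      intro t
      have h := hstrict (ω t) (hωW t)
      have h2 := hcov (ω t) (hωP t) h.1.le h.2.le
      rw [Set.mem_iUnion] at h2
      obtain ⟨i, hi⟩ := h2
      exact ⟨i, Finset.mem_univ i, hi⟩
    obtain ⟨i, -, T1, hT1⟩ := tail_in_convex M hωP hωmono Finset.univ C
      (fun i _ => (hC i).2.1) hωcov
    obtain ⟨hCiP, hCiConv, ⟨γ, hγC, hγmono, hγhit⟩, wq, hwqC, hwq⟩ := hC i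
    have hγP : ∀ t, γ t ∈ M.prefLang := fun t => hCiP (hγC t)
    have hγcov : ∀ t, ∃ R ∈ hVfin.toFinset, γ t ∈ (id R : Set (List α)) := by
      intro t
      obtain ⟨R, hR, hmem⟩ := hmemPref (hγP t)
      exact ⟨R, hVfin.mem_toFinset.mpr hR, hmem⟩
    obtain ⟨P, hPF, T2, hT2⟩ := tail_in_convex M hγP hγmono hVfin.toFinset id
      (fun R hR => (hVmem R (hVfin.mem_toFinset.mp hR)).1) hγcov
    have hPV : P ∈ V := hVfin.mem_toFinset.mp hPF
    have hqCi : ∃ w ∈ C i, M.eval w = some q := ⟨wq, hwqC, hq ▸ hwq⟩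
    obtain ⟨t, htT2, hqt⟩ := hγhit q hqCi T2
    have hγtP : γ t ∈ (P : Set (List α)) := hT2 t htT2
    by_cases hPW : P = W
    · exact ⟨γ t, hPW ▸ hγtP, hqt.trans hq.symm⟩
    exfalso
    have ha0W : ω T1 ∈ W := hωW T1
    have ha0C : ω T1 ∈ C i := hT1 T1 le_rfl
    have hb0P : γ T2 ∈ (P : Set (List α)) := hT2 T2 le_rfl
    have hb0C : γ T2 ∈ C i := hγC T2
    set a0 := ω T1 with ha0def
    set b0 := γ T2 with hb0def
    set H : Set (List α) := {w | w ∈ M.prefLang ∧ (∃ a ∈ W ∪ P, a.reverse ≤ w.reverse) ∧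
      (∃ b ∈ W ∪ P, w.reverse ≤ b.reverse)} with hHdef
    have hWPmem : ∀ w ∈ W ∪ P, w ∈ M.prefLang := by
      rintro w (h | h)
      · exact hmemPref' hW h
      · exact hmemPref' hPV h
    have hWsubH : W ⊆ H := fun w hw =>
      ⟨hmemPref' hW hw, ⟨w, Or.inl hw, le_rfl⟩, ⟨w, Or.inl hw, le_rfl⟩⟩
    have hPsubH : P ⊆ H := fun w hw =>
      ⟨hmemPref' hPV hw, ⟨w, Or.inr hw, le_rfl⟩, ⟨w, Or.inr hw, le_rfl⟩⟩
    have hpart_sub : ∀ R ∈ V, (∃ w ∈ R, w ∈ H) → R ⊆ H := by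
      rintro R hRV ⟨w0, hw0R, hw0H⟩ r hrR
      have hrP : r ∈ M.prefLang := hmemPref' hRV hrR
      obtain ⟨-, ⟨a, haWP, ha⟩, ⟨b, hbWP, hb⟩⟩ := hw0H
      refine ⟨hrP, ?_, ?_⟩
      · by_cases h : a.reverse ≤ r.reverse
        · exact ⟨a, haWP, h⟩
        · push_neg at h
          have haR : a ∈ R := (hVmem R hRV).1 hrR hw0R (hWPmem a haWP) h.le ha
          rcases haWP with haW | haP
          · have hRW : R = W := part_unique hVdis hRV hW haR haW
            exact ⟨r, Or.inl (hRW ▸ hrR), le_rfl⟩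
          · have hRP : R = P := part_unique hVdis hRV hPV haR haP
            exact ⟨r, Or.inr (hRP ▸ hrR), le_rfl⟩
      · by_cases h : r.reverse ≤ b.reverse
        · exact ⟨b, hbWP, h⟩
        · push_neg at h
          have hbR : b ∈ R := (hVmem R hRV).1 hw0R hrR (hWPmem b hbWP) hb h.le
          rcases hbWP with hbW | hbP
          · have hRW : R = W := part_unique hVdis hRV hW hbR hbW
            exact ⟨r, Or.inl (hRW ▸ hrR), le_rfl⟩
          · have hRP : R = P := part_unique hVdis hRV hPV hbR hbP
            exact ⟨r, Or.inr (hRP ▸ hrR), le_rfl⟩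
    have hQsubC : ∀ R ∈ V, R ≠ W → R ≠ P → (∃ w ∈ R, w ∈ H) → R ⊆ C i := by
      intro R hRV hRW hRP hRH r hrR
      have hrH : r ∈ H := hpart_sub R hRV hRH hrR
      obtain ⟨hrPref, ⟨a, haWP, ha⟩, ⟨b, hbWP, hb⟩⟩ := hrH
      have hlow : a0.reverse ≤ r.reverse ∨ b0.reverse ≤ r.reverse := by
        by_contra h
        push_neg at h
        rcases haWP with haW | haP
        · have : r ∈ W := (hVmem W hW).1 haW ha0W hrPref ha h.1.le
          exact hRW (part_unique hVdis hRV hW hrR this)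
        · have : r ∈ P := (hVmem P hPV).1 haP hb0P hrPref ha h.2.le
          exact hRP (part_unique hVdis hRV hPV hrR this)
      have hhigh : r.reverse ≤ a0.reverse ∨ r.reverse ≤ b0.reverse := by
        by_contra h
        push_neg at h
        rcases hbWP with hbW | hbP
        · have : r ∈ W := (hVmem W hW).1 ha0W hbW hrPref h.1.le hb
          exact hRW (part_unique hVdis hRV hW hrR this)
        · have : r ∈ P := (hVmem P hPV).1 hb0P hbP hrPref h.2.le hb
          exact hRP (part_unique hVdis hRV hPV hrR this)
      rcases hlow with h1 | h1 <;> rcases hhigh with h2 | h2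
      · exact hCiConv ha0C ha0C hrPref h1 h2
      · exact hCiConv ha0C hb0C hrPref h1 h2
      · exact hCiConv hb0C ha0C hrPref h1 h2
      · exact hCiConv hb0C hb0C hrPref h1 h2
    have hstWCi : ∀ q', (∃ w ∈ W, M.eval w = some q') → ∃ w ∈ C i, M.eval w = some q' := by
      intro q' hq'
      obtain ⟨t', ht', hev⟩ := hωhit q' hq' T1
      exact ⟨ω t', hT1 t' ht', hev⟩
    have hstCiP : ∀ q', (∃ w ∈ C i, M.eval w = some q') →
        ∃ w ∈ (P : Set (List α)), M.eval w = some q' := by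
      intro q' hq'
      obtain ⟨t', ht', hev⟩ := hγhit q' hq' T2
      exact ⟨γ t', hT2 t' ht', hev⟩
    set J : Set (Set (List α)) := {R | R ∈ V ∧ ∃ w ∈ R, w ∈ H} with hJdef
    set U := ⋃₀ J with hUdef
    have hWJ : W ∈ J := ⟨hW, a0, ha0W, hWsubH ha0W⟩
    have hPJ : P ∈ J := ⟨hPV, b0, hb0P, hPsubH hb0P⟩
    have hUH : U = H := by
      apply Set.Subset.antisymm
      · rintro w ⟨R, ⟨hRV, hRH⟩, hwR⟩
        exact hpart_sub R hRV hRH hwR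
      · intro w hwH
        obtain ⟨R, hRV, hwR⟩ := hmemPref hwH.1
        exact ⟨R, ⟨hRV, w, hwR, hwH⟩, hwR⟩
    have hUconv : M.ConvexIn U := by
      rw [hUH]
      intro x z y hx hz hy h1 h2
      obtain ⟨-, ⟨a, haWP, ha⟩, -⟩ := hx
      obtain ⟨-, -, ⟨b, hbWP, hb⟩⟩ := hz
      exact ⟨hy, ⟨a, haWP, ha.trans h1⟩, ⟨b, hbWP, h2.trans hb⟩⟩
    have hUent : M.EntangledWords U := by
      obtain ⟨π, hπP, hπmono, hπhit⟩ := (hVmem P hPV).2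
      refine ⟨π, fun t => ⟨P, hPJ, hπP t⟩, hπmono, ?_⟩
      rintro q' ⟨w, hwU, hwq'⟩ n0
      obtain ⟨R, hRJ, hwR⟩ := hwU
      have hinP : ∃ w ∈ (P : Set (List α)), M.eval w = some q' := by
        by_cases hRW : R = W
        · exact hstCiP q' (hstWCi q' ⟨w, hRW ▸ hwR, hwq'⟩)
        · by_cases hRP : R = P
          · exact ⟨w, hRP ▸ hwR, hwq'⟩
          · exact hstCiP q' ⟨w, hQsubC R hRJ.1 hRW hRP hRJ.2 hwR, hwq'⟩
      exact hπhit q' hinP n0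
    set V' : Set (Set (List α)) := insert U (V \ J) with hV'def
    have hV'fin : V'.Finite := (hVfin.subset Set.diff_subset).insert U
    have hV'ecd : M.IsECD V' := by
      refine ⟨?_, ?_, ?_⟩
      · apply Set.Subset.antisymm
        · rintro w ⟨R, hR, hwR⟩
          rcases Set.mem_insert_iff.mp hR with rfl | ⟨hRV, -⟩
          · have : w ∈ H := hUH ▸ hwR
            exact this.1
          · exact hmemPref' hRV hwR
        · intro w hw
          obtain ⟨R, hRV, hwR⟩ := hmemPref hw
          by_cases hRJ : R ∈ J
          · exact ⟨U, Set.mem_insert _ _, ⟨R, hRJ, hwR⟩⟩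
          · exact ⟨R, Set.mem_insert_of_mem _ ⟨hRV, hRJ⟩, hwR⟩
      · intro X hX Y hY hXY
        rcases Set.mem_insert_iff.mp hX with rfl | hX'
        · rcases Set.mem_insert_iff.mp hY with rfl | hY'
          · exact absurd rfl hXY
          · rw [Set.disjoint_left]
            rintro w ⟨R, hRJ, hwR⟩ hwY
            have hRY : R = Y := part_unique hVdis hRJ.1 hY'.1 hwR hwY
            exact hY'.2 (hRY ▸ hRJ)
        · rcases Set.mem_insert_iff.mp hY with rfl | hY'
          · rw [Set.disjoint_right]
            rintro w ⟨R, hRJ, hwR⟩ hwX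
            have hRX : R = X := part_unique hVdis hRJ.1 hX'.1 hwR hwX
            exact hX'.2 (hRX ▸ hRJ)
          · exact hVdis hX'.1 hY'.1 hXY
      · intro Y hY
        rcases Set.mem_insert_iff.mp hY with rfl | hY'
        · exact ⟨hUconv, hUent⟩
        · exact hVmem Y hY'.1
    have hWP2 : W ≠ P := fun h => hPW h.symm
    have hpairV : ({W, P} : Set (Set (List α))) ⊆ V := by
      rintro R (rfl | rfl)
      · exact hW
      · exact hPV
    have hsub2 : V \ J ⊆ V \ {W, P} := by
      rintro R ⟨hRV, hRJ⟩
      refine ⟨hRV, ?_⟩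
      rintro (rfl | rfl)
      · exact hRJ hWJ
      · exact hRJ hPJ
    have hcard : V'.ncard < V.ncard := by
      have h1 : V'.ncard ≤ (V \ J).ncard + 1 := Set.ncard_insert_le U _
      have h2 : (V \ J).ncard ≤ (V \ {W, P}).ncard :=
        Set.ncard_le_ncard hsub2 (hVfin.subset Set.diff_subset)
      have h3 : (V \ ({W, P} : Set (Set (List α)))).ncard = V.ncard - 2 := by
        rw [Set.ncard_diff hpairV (Set.toFinite _), Set.ncard_pair hWP2]
      have h4 : 2 ≤ V.ncard := by
        have h5 : ({W, P} : Set (Set (List α))).ncard ≤ V.ncard :=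
          Set.ncard_le_ncard hpairV hVfin
        rwa [Set.ncard_pair hWP2] at h5
      omega
    exact absurd (hVmin V' hV'fin hV'ecd) (not_le.mpr hcard)

end AuxLemmas

/-- Lemma: decomposition-free characterization of `∼_V` for a minimum-size e.c.
decomposition `V`: `α ∼_V α'` iff the two words reach the same state and the co-lex
interval between them is covered by finitely many convex sets, each entangled in `M` and
meeting `I_{δ(s,α)}`. In particular `∼_V` does not depend on the choice of `V`. -/
theorem simV_iff_simR {α σ : Type*} [LinearOrder α] [Fintype σ]
    (M : PDFA α σ) (hM : M.Trim)
    (V : Set (Set (List α))) (hV : M.IsMinECD V)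
    (u v : List α) (hu : u ∈ M.prefLang) (hv : v ∈ M.prefLang) :
    (M.simV V u v ↔ M.simR u v) ∧
    (∀ V' : Set (Set (List α)), M.IsMinECD V' → (M.simV V u v ↔ M.simV V' u v)) := by
  have h1 := main_simV_iff_simR M V hV u v hu hv
  exact ⟨h1, fun V' hV' => h1.trans (main_simV_iff_simR M V' hV' u v hu hv).symm⟩
end
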